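/- arXiv:1408.4983 — 3 statements merged into one kernel-verified Lean document; each statement's English description precedes it below -/
import Mathlib

section
/- Let N ≥ 2 be an integer and η = exp(2πi/N). For every n ≥ 0, Σ_{α=1}^{N−1} ω^N_{n;α} = (N^{n+1} − 1)·B_{n+1}/(n+1). Moreover, for every integer α with N ∤ α, each ω^N_{m;α} lies in the cyclotomic field ℚ(η); ω^N_{m;α} is real whenever m ≥ 1 is odd, and ω^N_{m;α} has real part zero (is purely imaginary) whenever m ≥ 2 is even. -/
open scoped BigOperators

noncomputable section

/-- The standard primitive `N`-th root of unity `η = exp(2πi/N)`. -/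
def rootN (N : ℕ) : ℂ := Complex.exp (2 * (Real.pi : ℂ) * Complex.I / (N : ℂ))

/-- The power series `(exp(X) - 1)/X ∈ ℂ[[X]]`. -/
def expm1DivX : PowerSeries ℂ :=
  PowerSeries.mk fun n => (PowerSeries.coeff (n + 1)) (PowerSeries.exp ℂ - 1)

/-- `ω^N_{n;α}`. -/
def omegaN (N : ℕ) (α : ℤ) (n : ℕ) : ℂ :=
  if (N : ℤ) ∣ α then
    (n.factorial : ℂ) * (PowerSeries.coeff (n + 1)) expm1DivX⁻¹
  else
    (n.factorial : ℂ) *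
      (PowerSeries.coeff n) (PowerSeries.C (rootN N ^ α) * PowerSeries.exp ℂ - 1)⁻¹

lemma rootN_primitive {N : ℕ} (hN : 2 ≤ N) : IsPrimitiveRoot (rootN N) N :=
  Complex.isPrimitiveRoot_exp N (by omega)

open Polynomial in
lemma aux_prod_poly {N : ℕ} (hN : 2 ≤ N) :
    ∏ a ∈ Finset.range N, (C (rootN N ^ a) * X - 1)
      = C ((-1:ℂ)^(N-1)) * (X ^ N - 1) := by
  have hη := rootN_primitive hN
  have hη0 : rootN N ≠ 0 := hη.ne_zero (by omega)
  have hpos : 0 < N := by omega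
  have h2 : (X:ℂ[X]) ^ N - C 1 = ∏ i ∈ Finset.range N, (X - C (rootN N ^ i * 1)) :=
    X_pow_sub_C_eq_prod hη hpos (one_pow N)
  have h1 : (X:ℂ[X]) ^ N - C 1 = ∏ i ∈ Finset.range N, (X - C ((rootN N)⁻¹ ^ i * 1)) :=
    X_pow_sub_C_eq_prod hη.inv hpos (one_pow N)
  -- product of the roots
  have hprod : ∏ a ∈ Finset.range N, rootN N ^ a = (-1:ℂ)^(N-1) := by
    have h0 := congrArg (Polynomial.eval 0) h2
    simp only [eval_sub, eval_pow, eval_X, eval_one, eval_prod, eval_mul, eval_C, mul_one,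
      zero_pow hpos.ne', zero_sub, map_one] at h0
    have h3 : ∏ x ∈ Finset.range N, (-rootN N ^ x)
        = (-1:ℂ)^N * ∏ a ∈ Finset.range N, rootN N ^ a := by
      calc ∏ x ∈ Finset.range N, (-rootN N ^ x)
          = ∏ x ∈ Finset.range N, ((-1) * rootN N ^ x) :=
            Finset.prod_congr rfl (fun x _ => by ring)
        _ = (∏ _x ∈ Finset.range N, (-1:ℂ)) * ∏ a ∈ Finset.range N, rootN N ^ a :=
            Finset.prod_mul_distrib
        _ = (-1:ℂ)^N * ∏ a ∈ Finset.range N, rootN N ^ a := by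
            rw [Finset.prod_const, Finset.card_range]
    rw [h3] at h0
    have key : (-1:ℂ)^N * (-1:ℂ)^(N-1) = -1 := by
      rw [← pow_add]
      have he : N + (N-1) = 2*(N-1)+1 := by omega
      rw [he, pow_succ, pow_mul]; simp
    linear_combination (-1:ℂ)^(N-1) * h0 + (∏ a ∈ Finset.range N, rootN N ^ a) * key
  calc ∏ a ∈ Finset.range N, (C (rootN N ^ a) * X - 1)
      = ∏ a ∈ Finset.range N, (C (rootN N ^ a) * (X - C ((rootN N)⁻¹ ^ a * 1))) := by
        refine Finset.prod_congr rfl (fun a _ => ?_)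
        rw [mul_sub, ← map_mul]
        rw [mul_one, ← mul_pow, mul_inv_cancel₀ hη0, one_pow, map_one]
    _ = (∏ a ∈ Finset.range N, C (rootN N ^ a)) * ∏ a ∈ Finset.range N, (X - C ((rootN N)⁻¹ ^ a * 1)) := by
        rw [Finset.prod_mul_distrib]
    _ = C ((-1:ℂ)^(N-1)) * (X ^ N - 1) := by
        rw [← map_prod, hprod, ← h1, map_one]


open Polynomial in
lemma aux_deriv_prod {ι : Type*} [DecidableEq ι] (s : Finset ι) (f : ι → ℂ[X]) :
    derivative (∏ i ∈ s, f i) = ∑ a ∈ s, (∏ b ∈ s.erase a, f b) * derivative (f a) := by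
  induction s using Finset.induction_on with
  | empty => simp
  | @insert i s hi ih =>
    rw [Finset.prod_insert hi, derivative_mul, ih, Finset.sum_insert hi,
      Finset.erase_insert hi, Finset.mul_sum]
    congr 1
    · ring
    refine Finset.sum_congr rfl (fun a ha => ?_)
    rw [Finset.erase_insert_of_ne (by rintro rfl; exact hi ha),
      Finset.prod_insert (fun h => hi (Finset.mem_of_mem_erase h))]
    ring

open Polynomial in
lemma aux_sum_poly {N : ℕ} (hN : 2 ≤ N) :
    ∑ a ∈ Finset.range N, ∏ b ∈ (Finset.range N).erase a, (C (rootN N ^ b) * X - 1)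
      = C ((-1:ℂ)^(N-1) * N) := by
  have hD := congrArg derivative (aux_prod_poly hN)
  rw [aux_deriv_prod] at hD
  have hd1 : ∀ a ∈ Finset.range N, (∏ b ∈ (Finset.range N).erase a,
      (C (rootN N ^ b) * X - 1)) * derivative (C (rootN N ^ a) * X - 1)
      = (∏ b ∈ (Finset.range N).erase a, (C (rootN N ^ b) * X - 1)) * C (rootN N ^ a) := by
    intro a _
    congr 1
    rw [derivative_sub, derivative_one, sub_zero, derivative_C_mul, derivative_X, mul_one]
  rw [Finset.sum_congr rfl hd1] at hD
  have hd2 : derivative (C ((-1:ℂ)^(N-1)) * (X ^ N - 1))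
      = C ((-1:ℂ)^(N-1)) * (C (N:ℂ) * X ^ (N-1)) := by
    rw [derivative_C_mul, derivative_sub, derivative_one, derivative_X_pow, sub_zero]
  rw [hd2] at hD
  -- multiply by X
  have hX := congrArg (· * X) hD
  simp only [Finset.sum_mul] at hX
  have hsplit : ∀ a ∈ Finset.range N,
      (∏ b ∈ (Finset.range N).erase a, (C (rootN N ^ b) * X - 1)) * C (rootN N ^ a) * X
      = C ((-1:ℂ)^(N-1)) * (X ^ N - 1)
        + ∏ b ∈ (Finset.range N).erase a, (C (rootN N ^ b) * X - 1) := by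
    intro a ha
    have hfull : (∏ b ∈ (Finset.range N).erase a, (C (rootN N ^ b) * X - 1))
        * (C (rootN N ^ a) * X - 1) = C ((-1:ℂ)^(N-1)) * (X ^ N - 1) := by
      rw [Finset.prod_erase_mul _ _ ha, aux_prod_poly hN]
    calc (∏ b ∈ (Finset.range N).erase a, (C (rootN N ^ b) * X - 1)) * C (rootN N ^ a) * X
        = (∏ b ∈ (Finset.range N).erase a, (C (rootN N ^ b) * X - 1)) * (C (rootN N ^ a) * X - 1)
          + ∏ b ∈ (Finset.range N).erase a, (C (rootN N ^ b) * X - 1) := by ring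
      _ = _ := by rw [hfull]
  rw [Finset.sum_congr rfl hsplit, Finset.sum_add_distrib, Finset.sum_const,
    Finset.card_range] at hX
  have hXN : (X:ℂ[X]) ^ (N-1) * X = X ^ N := by
    rw [← pow_succ]
    congr 1
    omega
  rw [nsmul_eq_mul] at hX
  have hcast : ((N:ℕ):ℂ[X]) = C (N:ℂ) := by simp
  rw [hcast] at hX
  have h9 := congrArg (· - C (N:ℂ) * (C ((-1:ℂ)^(N-1)) * (X ^ N - 1))) hX
  rw [add_sub_cancel_left] at h9
  rw [h9, ← hXN, map_mul]
  ring

open PowerSeries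

lemma aux_aeval_factor (c : ℂ) :
    Polynomial.aeval (exp ℂ) (Polynomial.C c * Polynomial.X - 1)
      = C c * exp ℂ - 1 := by
  simp [Polynomial.aeval_C, PowerSeries.algebraMap_apply]

lemma aux_range_eq {N : ℕ} (hN : 2 ≤ N) :
    Finset.range N = insert 0 (Finset.Icc 1 (N-1)) := by
  ext x; simp only [Finset.mem_range, Finset.mem_insert, Finset.mem_Icc]; omega

lemma aux_not_mem : ∀ N : ℕ, 0 ∉ Finset.Icc 1 (N-1) := by simp

lemma aux_prod_ps {N : ℕ} (hN : 2 ≤ N) :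
    (exp ℂ - 1) * ∏ a ∈ Finset.Icc 1 (N-1), (C (rootN N ^ a) * exp ℂ - 1)
      = C ((-1:ℂ)^(N-1)) * (rescale (N:ℂ) (exp ℂ) - 1) := by
  have h := congrArg (Polynomial.aeval (exp ℂ)) (aux_prod_poly hN)
  rw [map_prod] at h
  simp only [aux_aeval_factor] at h
  simp only [map_mul, Polynomial.aeval_C, map_sub, map_one, map_pow, Polynomial.aeval_X] at h
  rw [aux_range_eq hN, Finset.prod_insert (aux_not_mem N)] at h
  simpa [PowerSeries.algebraMap_apply, exp_pow_eq_rescale_exp] using h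

lemma aux_sum_ps {N : ℕ} (hN : 2 ≤ N) :
    (∏ a ∈ Finset.Icc 1 (N-1), (C (rootN N ^ a) * exp ℂ - 1))
      + ∑ a ∈ Finset.Icc 1 (N-1), (exp ℂ - 1)
          * ∏ b ∈ (Finset.Icc 1 (N-1)).erase a, (C (rootN N ^ b) * exp ℂ - 1)
      = C ((-1:ℂ)^(N-1) * N) := by
  have h := congrArg (Polynomial.aeval (exp ℂ)) (aux_sum_poly hN)
  rw [map_sum, Polynomial.aeval_C] at h
  simp only [map_prod, aux_aeval_factor] at h
  rw [aux_range_eq hN, Finset.sum_insert (aux_not_mem N)] at h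
  rw [Finset.erase_insert (aux_not_mem N)] at h
  have hterm : ∀ a ∈ Finset.Icc 1 (N-1),
      ∏ b ∈ (insert 0 (Finset.Icc 1 (N-1))).erase a, (C (rootN N ^ b) * exp ℂ - 1)
      = (exp ℂ - 1) * ∏ b ∈ (Finset.Icc 1 (N-1)).erase a, (C (rootN N ^ b) * exp ℂ - 1) := by
    intro a ha
    have ha0 : (0:ℕ) ≠ a := by
      rw [Finset.mem_Icc] at ha; omega
    rw [Finset.erase_insert_of_ne ha0, Finset.prod_insert
      (fun hc => aux_not_mem N (Finset.mem_of_mem_erase hc))]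
    simp
  rw [Finset.sum_congr rfl hterm] at h
  rw [h]
  simp [PowerSeries.algebraMap_apply]

lemma aux_eq_inv {a b : PowerSeries ℂ} (hb : constantCoeff b ≠ 0)
    (h : a * b = 1) : a = b⁻¹ := by
  calc a = a * (b * b⁻¹) := by rw [PowerSeries.mul_inv_cancel b hb, mul_one]
  _ = (a * b) * b⁻¹ := by ring
  _ = b⁻¹ := by rw [h, one_mul]

lemma aux_expm1DivX_inv : expm1DivX⁻¹ = bernoulliPowerSeries ℂ := by
  have hXf : expm1DivX * X = exp ℂ - 1 := by
    ext n
    cases n with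
    | zero => simp [coeff_zero_mul_X, coeff_exp, coeff_one]
    | succ n =>
      rw [PowerSeries.coeff_succ_mul_X, expm1DivX, coeff_mk]
  have hc : constantCoeff expm1DivX = 1 := by
    rw [← coeff_zero_eq_constantCoeff_apply, expm1DivX, coeff_mk]
    simp [coeff_exp, coeff_one]
  have hmul : bernoulliPowerSeries ℂ * expm1DivX = 1 := by
    have h := bernoulliPowerSeries_mul_exp_sub_one ℂ
    have h2 : (bernoulliPowerSeries ℂ * expm1DivX) * X = 1 * X := by
      rw [mul_assoc, hXf, h, one_mul]
    exact mul_right_cancel₀ X_ne_zero h2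
  exact (aux_eq_inv (by rw [hc]; exact one_ne_zero) hmul).symm

lemma aux_main {N : ℕ} (hN : 2 ≤ N) :
    (X : ℂ⟦X⟧) * ∑ a ∈ Finset.Icc 1 (N-1), (C (rootN N ^ a) * exp ℂ - 1)⁻¹
      = rescale (N:ℂ) (bernoulliPowerSeries ℂ) - bernoulliPowerSeries ℂ := by
  have hη := rootN_primitive hN
  set s := Finset.Icc 1 (N-1) with hs
  set u : ℕ → ℂ⟦X⟧ := fun a => C (rootN N ^ a) * exp ℂ - 1 with hu
  set P : ℂ⟦X⟧ := ∏ a ∈ s, u a with hPdef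
  set R : ℂ⟦X⟧ := rescale (N:ℂ) (exp ℂ) - 1 with hRdef
  have hcu : ∀ a ∈ s, constantCoeff (u a) ≠ 0 := by
    intro a ha
    rw [hs, Finset.mem_Icc] at ha
    have h1 : constantCoeff (u a) = rootN N ^ a - 1 := by
      simp [hu, constantCoeff_exp]
    rw [h1, sub_ne_zero]
    exact hη.pow_ne_one_of_pos_of_lt (by omega) (by omega)
  have hR0 : R ≠ 0 := by
    intro h
    have h1 : (coeff 1) R = (N:ℂ) := by
      simp [hRdef, coeff_rescale, coeff_exp, coeff_one]
    rw [h, map_zero] at h1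
    exact (Nat.cast_ne_zero (R := ℂ)).mpr (by omega) h1.symm
  have heP : (exp ℂ - 1) * P = C ((-1:ℂ)^(N-1)) * R := aux_prod_ps hN
  have hsum : P + ∑ a ∈ s, (exp ℂ - 1) * ∏ b ∈ s.erase a, u b
      = C ((-1:ℂ)^(N-1) * N) := aux_sum_ps hN
  have hsq : (C ((-1:ℂ)^(N-1))) * (C ((-1:ℂ)^(N-1))) = 1 := by
    rw [← map_mul, ← pow_add]
    have : (-1:ℂ)^((N-1)+(N-1)) = 1 := Even.neg_one_pow ⟨N-1, rfl⟩
    rw [this, map_one]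
  have hRe : R = C ((-1:ℂ)^(N-1)) * ((exp ℂ - 1) * P) := by
    rw [heP, ← mul_assoc, hsq, one_mul]
  apply mul_right_cancel₀ hR0
  -- LHS
  have hterm : ∀ a ∈ s, (u a)⁻¹ * R
      = C ((-1:ℂ)^(N-1)) * ((exp ℂ - 1) * ∏ b ∈ s.erase a, u b) := by
    intro a ha
    have hPa : P = u a * ∏ b ∈ s.erase a, u b := (Finset.mul_prod_erase s u ha).symm
    rw [hRe, hPa]
    have hinv : (u a)⁻¹ * u a = 1 := PowerSeries.inv_mul_cancel _ (hcu a ha)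
    calc (u a)⁻¹ * (C ((-1:ℂ)^(N-1)) * ((exp ℂ - 1) * (u a * ∏ b ∈ s.erase a, u b)))
        = ((u a)⁻¹ * u a) * (C ((-1:ℂ)^(N-1)) * ((exp ℂ - 1) * ∏ b ∈ s.erase a, u b)) := by
          ring
      _ = _ := by rw [hinv, one_mul]
  have hSR : (∑ a ∈ s, (u a)⁻¹) * R
      = C ((-1:ℂ)^(N-1)) * (C ((-1:ℂ)^(N-1) * N) - P) := by
    rw [Finset.sum_mul, Finset.sum_congr rfl hterm, ← Finset.mul_sum]
    congr 1
    have := hsum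
    linear_combination this
  -- RHS pieces
  have hrb : rescale (N:ℂ) (bernoulliPowerSeries ℂ) * R = C (N:ℂ) * X := by
    have hR' : R = rescale (N:ℂ) (exp ℂ - 1) := by
      rw [map_sub, map_one]
    rw [hR', ← map_mul, bernoulliPowerSeries_mul_exp_sub_one, rescale_X]
  have hbR : bernoulliPowerSeries ℂ * R = C ((-1:ℂ)^(N-1)) * (X * P) := by
    rw [hRe]
    calc bernoulliPowerSeries ℂ * (C ((-1:ℂ)^(N-1)) * ((exp ℂ - 1) * P))
        = C ((-1:ℂ)^(N-1)) * ((bernoulliPowerSeries ℂ * (exp ℂ - 1)) * P) := by ring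
      _ = _ := by rw [bernoulliPowerSeries_mul_exp_sub_one]
  calc (X * ∑ a ∈ s, (u a)⁻¹) * R
      = X * ((∑ a ∈ s, (u a)⁻¹) * R) := by ring
    _ = X * (C ((-1:ℂ)^(N-1)) * (C ((-1:ℂ)^(N-1) * N) - P)) := by rw [hSR]
    _ = C (N:ℂ) * X - C ((-1:ℂ)^(N-1)) * (X * P) := by
        rw [map_mul]
        have : C ((-1:ℂ)^(N-1)) * (C ((-1:ℂ)^(N-1)) * C (N:ℂ)) = C (N:ℂ) := by
          rw [← mul_assoc, hsq, one_mul]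
        linear_combination X * this
    _ = (rescale (N:ℂ) (bernoulliPowerSeries ℂ) - bernoulliPowerSeries ℂ) * R := by
        rw [sub_mul, hrb, hbR]

lemma aux_part1 {N : ℕ} (hN : 2 ≤ N) (n : ℕ) :
    ∑ a ∈ Finset.Icc 1 (N - 1), omegaN N (a : ℤ) n
      = ((N : ℂ) ^ (n + 1) - 1) * (bernoulli (n + 1) : ℂ) / (n + 1) := by
  have hω : ∀ a ∈ Finset.Icc 1 (N-1), omegaN N (a:ℤ) n
      = (n.factorial : ℂ) * (coeff n) (C (rootN N ^ a) * exp ℂ - 1)⁻¹ := by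
    intro a ha
    rw [Finset.mem_Icc] at ha
    rw [omegaN, if_neg]
    · norm_num [zpow_natCast]
    · rw [Int.natCast_dvd_natCast]
      intro hdvd
      have := Nat.le_of_dvd (by omega) hdvd
      omega
  rw [Finset.sum_congr rfl hω, ← Finset.mul_sum]
  have hcoeff : ∑ a ∈ Finset.Icc 1 (N-1), (coeff n) (C (rootN N ^ a) * exp ℂ - 1)⁻¹
      = (coeff (n+1)) (rescale (N:ℂ) (bernoulliPowerSeries ℂ) - bernoulliPowerSeries ℂ) := by
    rw [← aux_main hN, coeff_succ_X_mul, map_sum]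
  rw [hcoeff, map_sub, coeff_rescale]
  simp only [bernoulliPowerSeries, coeff_mk]
  have halg : (algebraMap ℚ ℂ) (bernoulli (n+1) / (n+1).factorial)
      = (bernoulli (n+1) : ℂ) / ((n+1).factorial : ℂ) := by
    rw [eq_ratCast]
    push_cast
    ring
  rw [halg]
  have hfac : ((n+1).factorial : ℂ) = ((n:ℂ)+1) * (n.factorial : ℂ) := by
    rw [Nat.factorial_succ]
    push_cast
    ring
  have hf0 : (n.factorial : ℂ) ≠ 0 := Nat.cast_ne_zero.mpr n.factorial_ne_zero
  have hn0 : ((n:ℂ)+1) ≠ 0 := by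
    have : ((n:ℂ)+1) = ((n+1 : ℕ) : ℂ) := by push_cast; ring
    rw [this]
    exact Nat.cast_ne_zero.mpr (by omega)
  rw [hfac]
  push_cast
  field_simp

section
variable {N : ℕ} (hN : 2 ≤ N) {α : ℤ} (hα : ¬ (N : ℤ) ∣ α)

lemma aux_zeta_ne_one (hN : 2 ≤ N) (hα : ¬ (N : ℤ) ∣ α) : rootN N ^ α ≠ 1 := by
  intro h
  exact hα (((rootN_primitive hN).zpow_eq_one_iff_dvd α).mp h)

lemma aux_const_v (hN : 2 ≤ N) (hα : ¬ (N : ℤ) ∣ α) :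
    constantCoeff (C (rootN N ^ α) * exp ℂ - 1) = rootN N ^ α - 1 := by
  simp [constantCoeff_exp]

lemma aux_const_v_ne (hN : 2 ≤ N) (hα : ¬ (N : ℤ) ∣ α) :
    constantCoeff (C (rootN N ^ α) * exp ℂ - 1) ≠ 0 := by
  rw [aux_const_v hN hα, sub_ne_zero]
  exact aux_zeta_ne_one hN hα

-- membership
lemma aux_mem (hN : 2 ≤ N) (hα : ¬ (N : ℤ) ∣ α) (n : ℕ) :
    (coeff n) (C (rootN N ^ α) * exp ℂ - 1)⁻¹
      ∈ IntermediateField.adjoin ℚ ({rootN N} : Set ℂ) := by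
  set K := IntermediateField.adjoin ℚ ({rootN N} : Set ℂ) with hK
  set v : ℂ⟦X⟧ := C (rootN N ^ α) * exp ℂ - 1 with hv
  have hηK : rootN N ∈ K := IntermediateField.subset_adjoin ℚ _ rfl
  have hζK : rootN N ^ α ∈ K := zpow_mem hηK α
  have hcoeffv : ∀ j : ℕ, (coeff j) v ∈ K := by
    intro j
    have : (coeff j) v = rootN N ^ α * (algebraMap ℚ ℂ) (1 / j.factorial)
        - (if j = 0 then 1 else 0) := by
      simp [hv, coeff_exp, PowerSeries.coeff_one]
    rw [this]
    refine sub_mem (mul_mem hζK (K.algebraMap_mem _)) ?_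
    split <;> [exact one_mem K; exact zero_mem K]
  have hconst : (constantCoeff v)⁻¹ ∈ K := by
    rw [aux_const_v hN hα]
    exact inv_mem (sub_mem hζK (one_mem K))
  induction n using Nat.strong_induction_on with
  | _ n ih =>
    rw [PowerSeries.coeff_inv]
    split
    · exact hconst
    · refine mul_mem (neg_mem hconst) (sum_mem (fun x hx => ?_))
      split
      · next hlt =>
          exact mul_mem (hcoeffv x.1) (ih x.2 hlt)
      · exact zero_mem K

lemma aux_conj_zeta (hN : 2 ≤ N) (hα : ¬ (N : ℤ) ∣ α) :
    (starRingEnd ℂ) (rootN N ^ α) = (rootN N ^ α)⁻¹ := by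
  have hη := rootN_primitive hN
  have habsη : ‖rootN N‖ = 1 :=
    Complex.norm_eq_one_of_pow_eq_one hη.pow_eq_one (by omega)
  have habs : ‖rootN N ^ α‖ = 1 := by
    rw [norm_zpow, habsη, one_zpow]
  exact (Complex.inv_eq_conj habs).symm

lemma aux_conj_coeff (hN : 2 ≤ N) (hα : ¬ (N : ℤ) ∣ α) (m : ℕ) (hm : 1 ≤ m) :
    (starRingEnd ℂ) ((coeff m) (C (rootN N ^ α) * exp ℂ - 1)⁻¹)
      = (-1:ℂ)^(m+1) * (coeff m) (C (rootN N ^ α) * exp ℂ - 1)⁻¹ := by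
  set ζ := rootN N ^ α with hζ
  have hζ0 : ζ ≠ 0 := zpow_ne_zero α (Complex.exp_ne_zero _)
  set v : ℂ⟦X⟧ := C ζ * exp ℂ - 1 with hv
  have hv0 : constantCoeff v ≠ 0 := aux_const_v_ne hN hα
  set M : ℂ⟦X⟧ →+* ℂ⟦X⟧ := map (starRingEnd ℂ) with hM
  have hMexp : M (exp ℂ) = exp ℂ := by
    ext j
    rw [hM, coeff_map, coeff_exp, eq_ratCast (algebraMap ℚ ℂ), map_ratCast]
  have hMv : M v = C ζ⁻¹ * exp ℂ - 1 := by
    rw [hv, map_sub, map_one, map_mul, PowerSeries.map_C, hMexp, hζ, aux_conj_zeta hN hα]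
  have hMv0 : constantCoeff (M v) ≠ 0 := by
    rw [hMv]
    have : constantCoeff (C ζ⁻¹ * exp ℂ - 1) = ζ⁻¹ - 1 := by
      simp [constantCoeff_exp]
    rw [this, sub_ne_zero]
    intro h
    exact aux_zeta_ne_one hN hα (by rw [← hζ, ← inv_inv ζ, h, inv_one])
  set E' : ℂ⟦X⟧ := rescale (-1 : ℂ) (exp ℂ) with hE'
  have hexpE' : exp ℂ * E' = 1 := exp_mul_exp_neg_eq_one (A := ℂ)
  set w : ℂ⟦X⟧ := rescale (-1 : ℂ) v with hw
  have hwE : w = C ζ * E' - 1 := by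
    have hrc : rescale (-1:ℂ) (C ζ) = C ζ := by
      ext n
      cases n with
      | zero => simp
      | succ n => simp [coeff_rescale, PowerSeries.coeff_C]
    rw [hw, hv, map_sub, map_one, map_mul, hrc]
  have hw0 : constantCoeff w ≠ 0 := by
    have h0 : constantCoeff w = constantCoeff v := by
      rw [hw, ← coeff_zero_eq_constantCoeff_apply, coeff_rescale, pow_zero, one_mul,
        coeff_zero_eq_constantCoeff_apply]
    rw [h0]
    exact hv0
  -- key identity
  have hkey : (M v) * (C ζ * E') = -w := by
    rw [hMv, hwE]
    have h1 : (C ζ⁻¹ * exp ℂ - 1) * (C ζ * E')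
        = C (ζ⁻¹ * ζ) * (exp ℂ * E') - C ζ * E' := by rw [map_mul]; ring
    rw [h1, inv_mul_cancel₀ hζ0, hexpE', map_one, one_mul]
    ring
  have hwinv : rescale (-1:ℂ) (v⁻¹) = w⁻¹ := by
    refine aux_eq_inv hw0 ?_
    rw [hw, ← map_mul, PowerSeries.inv_mul_cancel v hv0, map_one]
  have hMvinv : M (v⁻¹) = (M v)⁻¹ := by
    refine aux_eq_inv hMv0 ?_
    rw [← map_mul, PowerSeries.inv_mul_cancel v hv0, map_one]
  have hMvinv2 : (-1 - w⁻¹ : ℂ⟦X⟧) = (M v)⁻¹ := by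
    refine aux_eq_inv hMv0 ?_
    have hvw : M v * w = -w - M v := by
      have := hkey
      rw [hwE] at this ⊢
      linear_combination this
    have hinvw : w⁻¹ * w = 1 := PowerSeries.inv_mul_cancel w hw0
    linear_combination (-(w⁻¹)) * hvw + (1 + M v) * hinvw
  have hfinal : M (v⁻¹) = -1 - rescale (-1:ℂ) (v⁻¹) := by
    rw [hMvinv, ← hMvinv2, hwinv]
  have := congrArg (coeff m) hfinal
  rw [hM, coeff_map, map_sub, coeff_rescale, map_neg, PowerSeries.coeff_one] at this
  rw [if_neg (by omega : ¬ m = 0)] at this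
  rw [this]
  have hodd : (-1:ℂ)^(m+1) = -(-1:ℂ)^m := by rw [pow_succ]; ring
  rw [hodd]
  ring
end

theorem stmt_1 (N : ℕ) (hN : 2 ≤ N) :
    (∀ n : ℕ, ∑ a ∈ Finset.Icc 1 (N - 1), omegaN N (a : ℤ) n
        = ((N : ℂ) ^ (n + 1) - 1) * (bernoulli (n + 1) : ℂ) / (n + 1)) ∧
    (∀ α : ℤ, ¬ (N : ℤ) ∣ α →
      (∀ m : ℕ, omegaN N α m ∈ IntermediateField.adjoin ℚ ({rootN N} : Set ℂ)) ∧
      (∀ m : ℕ, 1 ≤ m → Odd m → (omegaN N α m).im = 0) ∧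
      (∀ m : ℕ, 2 ≤ m → Even m → (omegaN N α m).re = 0)) := by
  constructor
  · exact fun n => aux_part1 hN n
  · intro α hα
    have homega : ∀ m : ℕ, omegaN N α m = (m.factorial : ℂ) *
        (PowerSeries.coeff m) (PowerSeries.C (rootN N ^ α) * PowerSeries.exp ℂ - 1)⁻¹ := by
      intro m
      rw [omegaN, if_neg hα]
    refine ⟨?_, ?_, ?_⟩
    · intro m
      rw [homega]
      exact mul_mem (natCast_mem _ _) (aux_mem hN hα m)
    · intro m hm hodd
      have hconj := aux_conj_coeff hN hα m hm
      set c := (PowerSeries.coeff m) (PowerSeries.C (rootN N ^ α) * PowerSeries.exp ℂ - 1)⁻¹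
        with hc
      rw [Even.neg_one_pow (by simpa using hodd.add_one)] at hconj
      rw [one_mul] at hconj
      have him : c.im = 0 := Complex.conj_eq_iff_im.mp hconj
      rw [homega]
      simp [Complex.mul_im, ← hc, him]
    · intro m hm heven
      have hconj := aux_conj_coeff hN hα m (by omega)
      set c := (PowerSeries.coeff m) (PowerSeries.C (rootN N ^ α) * PowerSeries.exp ℂ - 1)⁻¹
        with hc
      rw [Odd.neg_one_pow (by simpa using heven.add_one)] at hconj
      have hre : c.re = 0 := by
        have h2 : c + (starRingEnd ℂ) c = 0 := by rw [hconj]; ring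
        rw [Complex.add_conj] at h2
        have h3 : (2:ℝ) * c.re = 0 := by exact_mod_cast h2
        linarith
      rw [homega]
      have him2 : ((m.factorial : ℂ)).im = 0 := by simp
      simp [Complex.mul_re, ← hc, hre, him2]

end
end

section
/- Let N be a positive integer, η = exp(2πi/N), α, β ∈ ℤ/Nℤ, and s₁, s₂ positive integers with s₁ + s₂ > 2; set s := s₁ + s₂ − 2. As an identity of holomorphic functions of q on |q| < 1: C(s, s₁−1)·(𝔇[s; α+β])(q)/s = [s₁; α](q)·[s₂; β](q) + C(s, s₁−1)·[s+1; α+β](q) − Σ over positive integers a, b with a + b = s + 2 of ( C(a−1, s₁−1)·[a, b; α+β, β](q) + C(a−1, s₂−1)·[a, b; α+β, α](q) ), where C(·,·) is the binomial coefficient. -/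
open scoped BigOperators

noncomputable section

/-- The multiple divisor sum at level `N`. -/
def mds (N d : ℕ) (s : Fin d → ℕ) (γ : Fin d → ZMod N) (n : ℕ) : ℂ :=
  ∑' uv : (Fin d → ℕ) × (Fin d → ℕ),
    if StrictAnti uv.1 ∧ (∀ i, 0 < uv.1 i) ∧ (∀ i, 0 < uv.2 i) ∧ ∑ i, uv.1 i * uv.2 i = n then
      rootN N ^ (∑ i, (γ i).val * uv.2 i) * ∏ i, (uv.2 i : ℂ) ^ (s i - 1)
    else 0

/-- The multiple divisor function at level `N`. -/
def mdf (N d : ℕ) (s : Fin d → ℕ) (γ : Fin d → ZMod N) (q : ℂ) : ℂ :=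
  (∏ i, ((s i - 1).factorial : ℂ))⁻¹ * ∑' n : ℕ, mds N d s γ (n + 1) * q ^ (n + 1)

/-- `𝔇[s;γ](q)`, where `𝔇 = q·d/dq`. -/
def Dmdf (N d : ℕ) (s : Fin d → ℕ) (γ : Fin d → ZMod N) (q : ℂ) : ℂ :=
  (∏ i, ((s i - 1).factorial : ℂ))⁻¹ *
    ∑' n : ℕ, ((n + 1 : ℕ) : ℂ) * mds N d s γ (n + 1) * q ^ (n + 1)

open Finset

namespace Stmt14

lemma norm_rootN (N : ℕ) : ‖rootN N‖ = 1 := by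
  have : (2 * (Real.pi : ℂ) * Complex.I / (N : ℂ)) = ((2 * Real.pi / N : ℝ) : ℂ) * Complex.I := by
    push_cast
    ring
  rw [rootN, this, Complex.norm_exp_ofReal_mul_I]

lemma rootN_pow_N (N : ℕ) (hN : 0 < N) : rootN N ^ N = 1 := by
  rw [rootN, ← Complex.exp_nat_mul]
  have hN' : (N : ℂ) ≠ 0 := Nat.cast_ne_zero.2 hN.ne'
  rw [mul_div_cancel₀ _ hN', Complex.exp_two_pi_mul_I]

lemma rootN_pow_mod (N : ℕ) (hN : 0 < N) (k : ℕ) : rootN N ^ k = rootN N ^ (k % N) := by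
  conv_lhs => rw [← Nat.div_add_mod k N]
  rw [pow_add, pow_mul, rootN_pow_N N hN, one_pow, one_mul]

lemma rootN_pow_congr (N : ℕ) (hN : 0 < N) {k m : ℕ} (h : k ≡ m [MOD N]) :
    rootN N ^ k = rootN N ^ m := by
  rw [rootN_pow_mod N hN k, rootN_pow_mod N hN m, h]

/-- index set for the 1-variable divisor sums -/
def P1 (n : ℕ) : Finset (ℕ × ℕ) :=
  (range (n+1) ×ˢ range (n+1)).filter fun p => 0 < p.1 ∧ 0 < p.2 ∧ p.1 * p.2 = n

lemma mem_P1 {n : ℕ} {p : ℕ × ℕ} : p ∈ P1 n ↔ 0 < p.1 ∧ 0 < p.2 ∧ p.1 * p.2 = n := by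
  unfold P1
  simp only [mem_filter, mem_product, mem_range]
  constructor
  · tauto
  · rintro ⟨h1, h2, h3⟩
    refine ⟨⟨?_, ?_⟩, h1, h2, h3⟩
    · have : p.1 ≤ p.1 * p.2 := Nat.le_mul_of_pos_right _ h2
      omega
    · have : p.2 ≤ p.1 * p.2 := Nat.le_mul_of_pos_left _ h1
      omega

/-- 1-variable coefficient -/
def c1 (N t : ℕ) (γ : ZMod N) (n : ℕ) : ℂ :=
  ∑ p ∈ P1 n, rootN N ^ (γ.val * p.2) * (p.2 : ℂ) ^ t

lemma c1_zero (N t : ℕ) (γ : ZMod N) : c1 N t γ 0 = 0 := by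
  apply Finset.sum_eq_zero
  intro p hp
  rw [mem_P1] at hp
  exfalso
  rcases hp with ⟨h1, h2, h3⟩
  have := Nat.mul_pos h1 h2
  omega

lemma norm_c1_le (N t : ℕ) (γ : ZMod N) (n : ℕ) :
    ‖c1 N t γ n‖ ≤ ((n+1 : ℕ) : ℝ) ^ (t + 2) := by
  calc ‖c1 N t γ n‖ ≤ ∑ p ∈ P1 n, ‖rootN N ^ (γ.val * p.2) * (p.2 : ℂ) ^ t‖ := norm_sum_le _ _
    _ ≤ ∑ _p ∈ P1 n, ((n+1 : ℕ) : ℝ) ^ t := by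
        apply Finset.sum_le_sum
        intro p hp
        rw [norm_mul, norm_pow, norm_pow, norm_rootN, one_pow, one_mul]
        have hp2 : p.2 ≤ n := by
          rw [mem_P1] at hp
          rcases hp with ⟨h1, h2, h3⟩
          have : p.2 ≤ p.1 * p.2 := Nat.le_mul_of_pos_left _ h1
          omega
        have : ‖(p.2 : ℂ)‖ = (p.2 : ℝ) := by
          simp [Complex.norm_natCast]
        rw [this]
        apply pow_le_pow_left₀ (by positivity)
        exact_mod_cast Nat.le_succ_of_le hp2
    _ ≤ ((n+1:ℕ):ℝ)^2 * ((n+1 : ℕ) : ℝ) ^ t := by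
        rw [Finset.sum_const, nsmul_eq_mul]
        apply mul_le_mul_of_nonneg_right _ (by positivity)
        have hc : (P1 n).card ≤ (n+1)^2 := by
          calc (P1 n).card ≤ ((range (n+1)) ×ˢ (range (n+1))).card := Finset.card_filter_le _ _
            _ = (n+1)^2 := by simp [Finset.card_product, sq]
        calc ((P1 n).card : ℝ) ≤ (((n+1)^2 : ℕ) : ℝ) := by exact_mod_cast hc
          _ = _ := by push_cast; ring
    _ = _ := by rw [← pow_add]; ring_nf
end Stmt14
namespace Stmt14
open Finset

def eq1 : (ℕ × ℕ) ≃ ((Fin 1 → ℕ) × (Fin 1 → ℕ)) :=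
  Equiv.prodCongr (Equiv.funUnique (Fin 1) ℕ).symm (Equiv.funUnique (Fin 1) ℕ).symm

lemma eq1_fst (p : ℕ × ℕ) : (eq1 p).1 = fun _ => p.1 := rfl
lemma eq1_snd (p : ℕ × ℕ) : (eq1 p).2 = fun _ => p.2 := rfl

lemma mds_one (N s : ℕ) (γ : ZMod N) (n : ℕ) :
    mds N 1 ![s] ![γ] n = c1 N (s - 1) γ n := by
  rw [mds, ← eq1.tsum_eq]
  have key : ∀ p : ℕ × ℕ,
      (if StrictAnti (eq1 p).1 ∧ (∀ i, 0 < (eq1 p).1 i) ∧ (∀ i, 0 < (eq1 p).2 i) ∧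
          ∑ i, (eq1 p).1 i * (eq1 p).2 i = n then
        rootN N ^ (∑ i, ((![γ] : Fin 1 → ZMod N) i).val * (eq1 p).2 i) *
          ∏ i, ((eq1 p).2 i : ℂ) ^ ((![s] : Fin 1 → ℕ) i - 1)
      else 0)
      = if 0 < p.1 ∧ 0 < p.2 ∧ p.1 * p.2 = n then
          rootN N ^ (γ.val * p.2) * (p.2 : ℂ) ^ (s - 1) else 0 := by
    intro p
    rw [eq1_fst, eq1_snd]
    congr 1
    · simp only [eq_iff_iff]
      constructor
      · rintro ⟨-, hu, hv, hs⟩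
        refine ⟨hu 0, hv 0, ?_⟩
        simpa using hs
      · rintro ⟨hu, hv, hs⟩
        exact ⟨Subsingleton.strictAnti _, fun _ => hu, fun _ => hv, by simpa using hs⟩
    · simp
  calc (∑' p : ℕ × ℕ, _) = ∑' p : ℕ × ℕ,
        (if 0 < p.1 ∧ 0 < p.2 ∧ p.1 * p.2 = n then
          rootN N ^ (γ.val * p.2) * (p.2 : ℂ) ^ (s - 1) else 0) := tsum_congr key
    _ = c1 N (s-1) γ n := by
        rw [tsum_eq_sum (s := P1 n), c1]
        · apply Finset.sum_congr rfl
          intro p hp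
          rw [if_pos (mem_P1.1 hp)]
        · intro p hp
          rw [if_neg]
          intro h
          exact hp (mem_P1.2 h)

lemma strictAnti_fin_two {u : Fin 2 → ℕ} : StrictAnti u ↔ u 1 < u 0 := by
  constructor
  · intro h
    exact h (by norm_num : (0 : Fin 2) < 1)
  · intro h i j hij
    have hi := i.isLt
    have hj := j.isLt
    have : i = 0 ∧ j = 1 := by
      constructor <;> · apply Fin.ext; rw [Fin.lt_def] at hij; omega
    rw [this.1, this.2]
    exact h

/-- index set for the 2-variable divisor sums: `((u₁,u₂),(v₁,v₂))` -/
def P2 (n : ℕ) : Finset ((ℕ × ℕ) × (ℕ × ℕ)) :=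
  ((range (n+1) ×ˢ range (n+1)) ×ˢ (range (n+1) ×ˢ range (n+1))).filter
    fun x => x.1.2 < x.1.1 ∧ 0 < x.1.2 ∧ 0 < x.2.1 ∧ 0 < x.2.2 ∧
      x.1.1 * x.2.1 + x.1.2 * x.2.2 = n

lemma mem_P2 {n : ℕ} {x : (ℕ × ℕ) × (ℕ × ℕ)} : x ∈ P2 n ↔
    x.1.2 < x.1.1 ∧ 0 < x.1.2 ∧ 0 < x.2.1 ∧ 0 < x.2.2 ∧
      x.1.1 * x.2.1 + x.1.2 * x.2.2 = n := by
  unfold P2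
  simp only [mem_filter, mem_product, mem_range]
  constructor
  · tauto
  · rintro ⟨h1, h2, h3, h4, h5⟩
    refine ⟨⟨⟨?_, ?_⟩, ?_, ?_⟩, h1, h2, h3, h4, h5⟩
    · have : x.1.1 ≤ x.1.1 * x.2.1 := Nat.le_mul_of_pos_right _ h3
      omega
    · have : x.1.2 ≤ x.1.2 * x.2.2 := Nat.le_mul_of_pos_right _ h4
      omega
    · have : x.2.1 ≤ x.1.1 * x.2.1 := Nat.le_mul_of_pos_left _ (by omega)
      omega
    · have : x.2.2 ≤ x.1.2 * x.2.2 := Nat.le_mul_of_pos_left _ h2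
      omega

/-- 2-variable coefficient -/
def c2 (N t₁ t₂ : ℕ) (γ₁ γ₂ : ZMod N) (n : ℕ) : ℂ :=
  ∑ x ∈ P2 n, rootN N ^ (γ₁.val * x.2.1 + γ₂.val * x.2.2) *
    ((x.2.1 : ℂ) ^ t₁ * (x.2.2 : ℂ) ^ t₂)

def eq2 : ((ℕ × ℕ) × (ℕ × ℕ)) ≃ ((Fin 2 → ℕ) × (Fin 2 → ℕ)) :=
  Equiv.prodCongr (piFinTwoEquiv fun _ => ℕ).symm (piFinTwoEquiv fun _ => ℕ).symm

lemma eq2_fst (x : (ℕ × ℕ) × (ℕ × ℕ)) : (eq2 x).1 = ![x.1.1, x.1.2] := by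
  funext i
  fin_cases i <;> rfl

lemma eq2_snd (x : (ℕ × ℕ) × (ℕ × ℕ)) : (eq2 x).2 = ![x.2.1, x.2.2] := by
  funext i
  fin_cases i <;> rfl

lemma mds_two (N a b : ℕ) (γ₁ γ₂ : ZMod N) (n : ℕ) :
    mds N 2 ![a, b] ![γ₁, γ₂] n = c2 N (a-1) (b-1) γ₁ γ₂ n := by
  rw [mds, ← eq2.tsum_eq]
  have key : ∀ x : (ℕ × ℕ) × (ℕ × ℕ),
      (if StrictAnti (eq2 x).1 ∧ (∀ i, 0 < (eq2 x).1 i) ∧ (∀ i, 0 < (eq2 x).2 i) ∧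
          ∑ i, (eq2 x).1 i * (eq2 x).2 i = n then
        rootN N ^ (∑ i, ((![γ₁, γ₂] : Fin 2 → ZMod N) i).val * (eq2 x).2 i) *
          ∏ i, ((eq2 x).2 i : ℂ) ^ ((![a, b] : Fin 2 → ℕ) i - 1)
      else 0)
      = if (x.1.2 < x.1.1 ∧ 0 < x.1.2 ∧ 0 < x.2.1 ∧ 0 < x.2.2 ∧
            x.1.1 * x.2.1 + x.1.2 * x.2.2 = n) then
          rootN N ^ (γ₁.val * x.2.1 + γ₂.val * x.2.2) *
            ((x.2.1 : ℂ) ^ (a-1) * (x.2.2 : ℂ) ^ (b-1)) else 0 := by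
    intro x
    rw [eq2_fst, eq2_snd]
    congr 1
    · simp only [eq_iff_iff, strictAnti_fin_two, Fin.forall_fin_two, Fin.sum_univ_two,
        Matrix.cons_val_zero, Matrix.cons_val_one, Matrix.head_cons]
      constructor
      · rintro ⟨hsa, hu, hv, hs⟩
        exact ⟨hsa, hu.2, hv.1, hv.2, hs⟩
      · rintro ⟨hlt, hu2, hv1, hv2, hs⟩
        exact ⟨hlt, ⟨by omega, hu2⟩, ⟨hv1, hv2⟩, hs⟩
    · simp only [Fin.sum_univ_two, Fin.prod_univ_two, Matrix.cons_val_zero,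
        Matrix.cons_val_one, Matrix.head_cons]
  calc (∑' x : (ℕ × ℕ) × (ℕ × ℕ), _)
      = ∑' x : (ℕ × ℕ) × (ℕ × ℕ),
        (if (x.1.2 < x.1.1 ∧ 0 < x.1.2 ∧ 0 < x.2.1 ∧ 0 < x.2.2 ∧
            x.1.1 * x.2.1 + x.1.2 * x.2.2 = n) then
          rootN N ^ (γ₁.val * x.2.1 + γ₂.val * x.2.2) *
            ((x.2.1 : ℂ) ^ (a-1) * (x.2.2 : ℂ) ^ (b-1)) else 0) := tsum_congr key
    _ = c2 N (a-1) (b-1) γ₁ γ₂ n := by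
        rw [tsum_eq_sum (s := P2 n), c2]
        · apply Finset.sum_congr rfl
          intro x hx
          rw [if_pos (mem_P2.1 hx)]
        · intro x hx
          rw [if_neg]
          intro h
          exact hx (mem_P2.2 h)

lemma c2_zero (N t₁ t₂ : ℕ) (γ₁ γ₂ : ZMod N) : c2 N t₁ t₂ γ₁ γ₂ 0 = 0 := by
  apply Finset.sum_eq_zero
  intro x hx
  exfalso
  rw [mem_P2] at hx
  rcases hx with ⟨h1, h2, h3, h4, h5⟩
  have := Nat.mul_pos h2 h4
  omega

lemma norm_c2_le (N t₁ t₂ : ℕ) (γ₁ γ₂ : ZMod N) (n : ℕ) :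
    ‖c2 N t₁ t₂ γ₁ γ₂ n‖ ≤ ((n+1 : ℕ) : ℝ) ^ (t₁ + t₂ + 4) := by
  have hb : ∀ x ∈ P2 n, ‖rootN N ^ (γ₁.val * x.2.1 + γ₂.val * x.2.2) *
      ((x.2.1 : ℂ) ^ t₁ * (x.2.2 : ℂ) ^ t₂)‖ ≤ ((n+1:ℕ):ℝ) ^ t₁ * ((n+1:ℕ):ℝ) ^ t₂ := by
    intro x hx
    rw [mem_P2] at hx
    have hv1 : x.2.1 ≤ n := by nlinarith [hx.2.2.1, hx.2.1, hx.1, hx.2.2.2.1]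
    have hv2 : x.2.2 ≤ n := by nlinarith [hx.2.2.1, hx.2.1, hx.1, hx.2.2.2.1]
    rw [norm_mul, norm_pow, norm_rootN, one_pow, one_mul, norm_mul, norm_pow, norm_pow]
    have e1 : ‖(x.2.1 : ℂ)‖ = (x.2.1 : ℝ) := by simp
    have e2 : ‖(x.2.2 : ℂ)‖ = (x.2.2 : ℝ) := by simp
    rw [e1, e2]
    apply mul_le_mul _ _ (by positivity) (by positivity)
    · apply pow_le_pow_left₀ (by positivity)
      exact_mod_cast Nat.le_succ_of_le hv1
    · apply pow_le_pow_left₀ (by positivity)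
      exact_mod_cast Nat.le_succ_of_le hv2
  calc ‖c2 N t₁ t₂ γ₁ γ₂ n‖ ≤ ∑ x ∈ P2 n, ‖rootN N ^ (γ₁.val * x.2.1 + γ₂.val * x.2.2) *
        ((x.2.1 : ℂ) ^ t₁ * (x.2.2 : ℂ) ^ t₂)‖ := norm_sum_le _ _
    _ ≤ ∑ _x ∈ P2 n, ((n+1:ℕ):ℝ) ^ t₁ * ((n+1:ℕ):ℝ) ^ t₂ := Finset.sum_le_sum hb
    _ ≤ ((n+1:ℕ):ℝ)^4 * (((n+1:ℕ):ℝ) ^ t₁ * ((n+1:ℕ):ℝ) ^ t₂) := by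
        rw [Finset.sum_const, nsmul_eq_mul]
        apply mul_le_mul_of_nonneg_right _ (by positivity)
        have hc : (P2 n).card ≤ (n+1)^4 := by
          calc (P2 n).card ≤ (((range (n+1) ×ˢ range (n+1)) ×ˢ (range (n+1) ×ˢ range (n+1)))).card :=
              Finset.card_filter_le _ _
            _ = (n+1)^4 := by simp [Finset.card_product]; ring
        calc ((P2 n).card : ℝ) ≤ (((n+1)^4 : ℕ) : ℝ) := by exact_mod_cast hc
          _ = _ := by push_cast; ring
    _ = _ := by rw [← pow_add, ← pow_add]; ring_nf

end Stmt14
namespace Stmt14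
open Finset

lemma summable_aux {q : ℂ} (hq : ‖q‖ < 1) (K : ℕ) :
    Summable (fun n : ℕ => ((n+1 : ℕ) : ℝ) ^ K * ‖q‖ ^ n) := by
  have hexp : ∀ n : ℕ, ((n+1:ℕ):ℝ) ^ K * ‖q‖ ^ n
      = ∑ j ∈ range (K+1), (K.choose j : ℝ) * ((n:ℝ) ^ j * ‖q‖ ^ n) := by
    intro n
    have : ((n+1:ℕ):ℝ) ^ K = ∑ j ∈ range (K+1), (K.choose j : ℝ) * (n:ℝ) ^ j := by
      push_cast
      rw [add_pow]
      apply Finset.sum_congr rfl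
      intro j hj
      ring
    rw [this, Finset.sum_mul]
    apply Finset.sum_congr rfl
    intro j hj
    ring
  rw [funext hexp]
  apply summable_sum
  intro j hj
  exact (summable_pow_mul_geometric_of_norm_lt_one (R := ℝ) j (r := ‖q‖) (by simpa using hq)).mul_left _

lemma summable_of_bound {q : ℂ} (hq : ‖q‖ < 1) {X : ℕ → ℂ} {K : ℕ}
    (h : ∀ n, ‖X n‖ ≤ ((n+1 : ℕ) : ℝ) ^ K) :
    Summable (fun n : ℕ => ‖X n * q ^ n‖) := by
  apply Summable.of_nonneg_of_le (fun n => norm_nonneg _) _ (summable_aux hq K)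
  intro n
  rw [norm_mul, norm_pow]
  exact mul_le_mul_of_nonneg_right (h n) (by positivity)

lemma summable_of_bound' {q : ℂ} (hq : ‖q‖ < 1) {X : ℕ → ℂ} {K : ℕ}
    (h : ∀ n, ‖X n‖ ≤ ((n+1 : ℕ) : ℝ) ^ K) :
    Summable (fun n : ℕ => X n * q ^ n) :=
  (summable_of_bound hq h).of_norm

lemma norm_n_mul_c1_le (N t : ℕ) (γ : ZMod N) (n : ℕ) :
    ‖(n : ℂ) * c1 N t γ n‖ ≤ ((n+1 : ℕ) : ℝ) ^ (t + 3) := by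
  rw [norm_mul]
  have h1 : ‖(n : ℂ)‖ ≤ ((n+1:ℕ):ℝ) := by
    rw [Complex.norm_natCast]
    push_cast
    linarith
  calc ‖(n:ℂ)‖ * ‖c1 N t γ n‖ ≤ ((n+1:ℕ):ℝ) * ((n+1:ℕ):ℝ)^(t+2) := by
        apply mul_le_mul h1 (norm_c1_le N t γ n) (norm_nonneg _) (by positivity)
    _ = _ := by rw [← pow_succ']

lemma summable_c1 {q : ℂ} (hq : ‖q‖ < 1) (N t : ℕ) (γ : ZMod N) :
    Summable (fun n : ℕ => c1 N t γ n * q ^ n) :=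
  summable_of_bound' hq (norm_c1_le N t γ)

lemma summable_c1_norm {q : ℂ} (hq : ‖q‖ < 1) (N t : ℕ) (γ : ZMod N) :
    Summable (fun n : ℕ => ‖c1 N t γ n * q ^ n‖) :=
  summable_of_bound hq (norm_c1_le N t γ)

lemma summable_n_c1 {q : ℂ} (hq : ‖q‖ < 1) (N t : ℕ) (γ : ZMod N) :
    Summable (fun n : ℕ => (n : ℂ) * c1 N t γ n * q ^ n) :=
  summable_of_bound' hq (norm_n_mul_c1_le N t γ)

lemma summable_c2 {q : ℂ} (hq : ‖q‖ < 1) (N t₁ t₂ : ℕ) (γ₁ γ₂ : ZMod N) :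
    Summable (fun n : ℕ => c2 N t₁ t₂ γ₁ γ₂ n * q ^ n) :=
  summable_of_bound' hq (norm_c2_le N t₁ t₂ γ₁ γ₂)

/-- series form of `mdf` for depth 1 -/
lemma mdf_one_eq {q : ℂ} (hq : ‖q‖ < 1) (N s : ℕ) (γ : ZMod N) :
    mdf N 1 ![s] ![γ] q = (((s-1).factorial : ℂ))⁻¹ * ∑' n : ℕ, c1 N (s-1) γ n * q ^ n := by
  rw [mdf]
  congr 1
  · simp
  · rw [Summable.tsum_eq_zero_add (summable_c1 hq N (s-1) γ)]
    simp only [c1_zero, pow_zero, zero_mul, zero_add]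
    apply tsum_congr
    intro n
    rw [mds_one]

lemma Dmdf_one_eq {q : ℂ} (hq : ‖q‖ < 1) (N s : ℕ) (γ : ZMod N) :
    Dmdf N 1 ![s] ![γ] q
      = (((s-1).factorial : ℂ))⁻¹ * ∑' n : ℕ, (n : ℂ) * c1 N (s-1) γ n * q ^ n := by
  rw [Dmdf]
  congr 1
  · simp
  · rw [Summable.tsum_eq_zero_add (summable_n_c1 hq N (s-1) γ)]
    simp only [Nat.cast_zero, zero_mul, pow_zero, mul_one, zero_add, c1_zero, mul_zero]
    apply tsum_congr
    intro n
    rw [mds_one]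

/-- series form of `mdf` for depth 2 -/
lemma mdf_two_eq {q : ℂ} (hq : ‖q‖ < 1) (N a b : ℕ) (γ₁ γ₂ : ZMod N) :
    mdf N 2 ![a, b] ![γ₁, γ₂] q
      = (((a-1).factorial : ℂ) * ((b-1).factorial : ℂ))⁻¹ *
          ∑' n : ℕ, c2 N (a-1) (b-1) γ₁ γ₂ n * q ^ n := by
  rw [mdf]
  congr 1
  · simp [Fin.prod_univ_two]
  · rw [Summable.tsum_eq_zero_add (summable_c2 hq N (a-1) (b-1) γ₁ γ₂)]
    simp only [c2_zero, pow_zero, zero_mul, zero_add]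
    apply tsum_congr
    intro n
    rw [mds_two]

end Stmt14
namespace Stmt14
open Finset

/-- weight coefficients -/
def wcoef (k₁ k₂ j : ℕ) : ℂ := if k₁ ≤ j then (k₂.choose (j - k₁) : ℂ) else 0

lemma binom_key (k₁ k₂ : ℕ) (W₁ W₂ : ℂ) :
    ∑ j ∈ range (k₁+k₂+1), wcoef k₁ k₂ j * (W₁ ^ j * W₂ ^ (k₁+k₂-j))
      = W₁ ^ k₁ * (W₁ + W₂) ^ k₂ := by
  have hsplit : ∑ j ∈ range (k₁+k₂+1), wcoef k₁ k₂ j * (W₁ ^ j * W₂ ^ (k₁+k₂-j))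
      = ∑ j ∈ Ico 0 k₁, wcoef k₁ k₂ j * (W₁ ^ j * W₂ ^ (k₁+k₂-j))
        + ∑ j ∈ Ico k₁ (k₁+k₂+1), wcoef k₁ k₂ j * (W₁ ^ j * W₂ ^ (k₁+k₂-j)) := by
    rw [Finset.sum_Ico_consecutive _ (Nat.zero_le _) (by omega), range_eq_Ico]
  rw [hsplit]
  have h0 : ∑ j ∈ Ico 0 k₁, wcoef k₁ k₂ j * (W₁ ^ j * W₂ ^ (k₁+k₂-j)) = 0 := by
    apply Finset.sum_eq_zero
    intro j hj
    rw [mem_Ico] at hj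
    rw [wcoef, if_neg (by omega), zero_mul]
  rw [h0, zero_add, Finset.sum_Ico_eq_sum_range]
  have hr : k₁ + k₂ + 1 - k₁ = k₂ + 1 := by omega
  rw [hr, add_pow, Finset.mul_sum]
  apply Finset.sum_congr rfl
  intro i hi
  rw [mem_range] at hi
  rw [wcoef, if_pos (by omega)]
  have h1 : k₁ + i - k₁ = i := by omega
  have h2 : k₁ + k₂ - (k₁ + i) = k₂ - i := by omega
  rw [h1, h2, pow_add]
  ring

/-- the index set of the Cauchy product: `((u₁,v₁),(u₂,v₂))` -/
def Q (n : ℕ) : Finset ((ℕ × ℕ) × (ℕ × ℕ)) :=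
  ((range (n+1) ×ˢ range (n+1)) ×ˢ (range (n+1) ×ˢ range (n+1))).filter
    fun x => 0 < x.1.1 ∧ 0 < x.1.2 ∧ 0 < x.2.1 ∧ 0 < x.2.2 ∧
      x.1.1 * x.1.2 + x.2.1 * x.2.2 = n

lemma mem_Q {n : ℕ} {x : (ℕ × ℕ) × (ℕ × ℕ)} : x ∈ Q n ↔
    0 < x.1.1 ∧ 0 < x.1.2 ∧ 0 < x.2.1 ∧ 0 < x.2.2 ∧
      x.1.1 * x.1.2 + x.2.1 * x.2.2 = n := by
  unfold Q
  simp only [mem_filter, mem_product, mem_range]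
  constructor
  · tauto
  · rintro ⟨h1, h2, h3, h4, h5⟩
    refine ⟨⟨⟨?_, ?_⟩, ?_, ?_⟩, h1, h2, h3, h4, h5⟩
    · have : x.1.1 ≤ x.1.1 * x.1.2 := Nat.le_mul_of_pos_right _ h2
      omega
    · have : x.1.2 ≤ x.1.1 * x.1.2 := Nat.le_mul_of_pos_left _ h1
      omega
    · have : x.2.1 ≤ x.2.1 * x.2.2 := Nat.le_mul_of_pos_right _ h4
      omega
    · have : x.2.2 ≤ x.2.1 * x.2.2 := Nat.le_mul_of_pos_left _ h3
      omega

/-- the summand of the Cauchy product -/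
def FF (N k₁ k₂ : ℕ) (α β : ZMod N) (x : (ℕ × ℕ) × (ℕ × ℕ)) : ℂ :=
  rootN N ^ (α.val * x.1.2 + β.val * x.2.2) * ((x.1.2 : ℂ) ^ k₁ * (x.2.2 : ℂ) ^ k₂)

lemma conv_eq (N k₁ k₂ : ℕ) (α β : ZMod N) (n : ℕ) :
    ∑ ij ∈ antidiagonal n, c1 N k₁ α ij.1 * c1 N k₂ β ij.2
      = ∑ x ∈ Q n, FF N k₁ k₂ α β x := by
  have hmaps : ∀ x ∈ Q n, (x.1.1 * x.1.2, x.2.1 * x.2.2) ∈ antidiagonal n := by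
    intro x hx
    rw [mem_Q] at hx
    rw [Finset.HasAntidiagonal.mem_antidiagonal]
    exact hx.2.2.2.2
  rw [← Finset.sum_fiberwise_of_maps_to hmaps (FF N k₁ k₂ α β)]
  apply Finset.sum_congr rfl
  intro ij hij
  rw [Finset.HasAntidiagonal.mem_antidiagonal] at hij
  have hfe : (Q n).filter (fun x => (x.1.1 * x.1.2, x.2.1 * x.2.2) = ij)
      = (P1 ij.1) ×ˢ (P1 ij.2) := by
    ext x
    simp only [mem_filter, mem_Q, mem_product, mem_P1, Prod.ext_iff]
    constructor
    · rintro ⟨⟨h1, h2, h3, h4, h5⟩, h6, h7⟩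
      exact ⟨⟨h1, h2, h6⟩, ⟨h3, h4, h7⟩⟩
    · rintro ⟨⟨h1, h2, h6⟩, ⟨h3, h4, h7⟩⟩
      exact ⟨⟨h1, h2, h3, h4, by omega⟩, h6, h7⟩
  rw [hfe, c1, c1, Finset.sum_mul_sum, Finset.sum_product]
  apply Finset.sum_congr rfl
  intro p hp
  apply Finset.sum_congr rfl
  intro r hr
  rw [FF]
  rw [pow_add]
  ring

lemma Q_split (N k₁ k₂ : ℕ) (α β : ZMod N) (n : ℕ) :
    ∑ x ∈ Q n, FF N k₁ k₂ α β x
      = ∑ x ∈ (Q n).filter (fun x => x.1.2 < x.2.2), FF N k₁ k₂ α β x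
        + ∑ x ∈ (Q n).filter (fun x => x.2.2 < x.1.2), FF N k₁ k₂ α β x
        + ∑ x ∈ (Q n).filter (fun x => x.1.2 = x.2.2), FF N k₁ k₂ α β x := by
  have h2 : ∑ x ∈ (Q n).filter (fun x => ¬ x.1.2 < x.2.2), FF N k₁ k₂ α β x
      = ∑ x ∈ (Q n).filter (fun x => x.2.2 < x.1.2), FF N k₁ k₂ α β x
        + ∑ x ∈ (Q n).filter (fun x => x.1.2 = x.2.2), FF N k₁ k₂ α β x := by
    rw [← Finset.sum_filter_add_sum_filter_not ((Q n).filter (fun x => ¬ x.1.2 < x.2.2))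
      (fun x => x.2.2 < x.1.2), Finset.filter_filter, Finset.filter_filter]
    congr 1
    · apply Finset.sum_congr _ (fun _ _ => rfl)
      apply Finset.filter_congr
      intro x hx
      omega
    · apply Finset.sum_congr _ (fun _ _ => rfl)
      apply Finset.filter_congr
      intro x hx
      omega
  rw [← Finset.sum_filter_add_sum_filter_not (Q n) (fun x => x.1.2 < x.2.2), h2]
  ring

end Stmt14
namespace Stmt14
open Finset

lemma val_add_modeq {N : ℕ} [NeZero N] (α β : ZMod N) :
    (α + β).val ≡ α.val + β.val [MOD N] := by
  rw [ZMod.val_add]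
  exact Nat.mod_modEq _ _

lemma lt_part (N k₁ k₂ : ℕ) (hN : 0 < N) (α β : ZMod N) (n : ℕ) :
    ∑ x ∈ (Q n).filter (fun x => x.1.2 < x.2.2), FF N k₁ k₂ α β x
      = ∑ j ∈ range (k₁+k₂+1), wcoef k₁ k₂ j * c2 N j (k₁+k₂-j) (α+β) β n := by
  haveI : NeZero N := ⟨hN.ne'⟩
  have hrhs : ∑ j ∈ range (k₁+k₂+1), wcoef k₁ k₂ j * c2 N j (k₁+k₂-j) (α+β) β n
      = ∑ y ∈ P2 n, rootN N ^ ((α+β).val * y.2.1 + β.val * y.2.2) *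
          ((y.2.1 : ℂ) ^ k₁ * ((y.2.1 : ℂ) + (y.2.2 : ℂ)) ^ k₂) := by
    simp only [c2, Finset.mul_sum]
    rw [Finset.sum_comm]
    apply Finset.sum_congr rfl
    intro y hy
    have : ∀ j, wcoef k₁ k₂ j * (rootN N ^ ((α+β).val * y.2.1 + β.val * y.2.2) *
        ((y.2.1 : ℂ) ^ j * (y.2.2 : ℂ) ^ (k₁+k₂-j)))
        = rootN N ^ ((α+β).val * y.2.1 + β.val * y.2.2) *
          (wcoef k₁ k₂ j * ((y.2.1 : ℂ) ^ j * (y.2.2 : ℂ) ^ (k₁+k₂-j))) := fun j => by ring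
    rw [funext this, ← Finset.mul_sum, binom_key]
  rw [hrhs]
  symm
  apply Finset.sum_nbij' (i := fun y => ((y.1.1 - y.1.2, y.2.1), (y.1.2, y.2.1 + y.2.2)))
    (j := fun x => ((x.1.1 + x.2.1, x.2.1), (x.1.2, x.2.2 - x.1.2)))
  · rintro ⟨⟨U₁, U₂⟩, W₁, W₂⟩ hy
    rw [mem_P2] at hy
    dsimp only at hy
    obtain ⟨hUU, hU2, hW1, hW2, hsum⟩ := hy
    rw [mem_filter, mem_Q]
    dsimp only
    have key : (U₁ - U₂) * W₁ + U₂ * (W₁ + W₂) = U₁ * W₁ + U₂ * W₂ := by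
      obtain ⟨t, ht⟩ : ∃ t, U₁ = U₂ + t := ⟨U₁ - U₂, by omega⟩
      subst ht
      have h : U₂ + t - U₂ = t := by omega
      rw [h]; ring
    exact ⟨⟨by omega, hW1, hU2, by omega, by omega⟩, by omega⟩
  · rintro ⟨⟨u₁, v₁⟩, u₂, v₂⟩ hx
    rw [mem_filter, mem_Q] at hx
    dsimp only at hx
    obtain ⟨⟨hu₁, hv₁, hu₂, hv₂, hsum⟩, hlt⟩ := hx
    rw [mem_P2]
    dsimp only
    have key : (u₁ + u₂) * v₁ + u₂ * (v₂ - v₁) = u₁ * v₁ + u₂ * v₂ := by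
      obtain ⟨w, hw⟩ : ∃ w, v₂ = v₁ + w := ⟨v₂ - v₁, by omega⟩
      subst hw
      have h : v₁ + w - v₁ = w := by omega
      rw [h]; ring
    exact ⟨by omega, hu₂, hv₁, by omega, by omega⟩
  · rintro ⟨⟨U₁, U₂⟩, W₁, W₂⟩ hy
    rw [mem_P2] at hy
    dsimp only at hy
    obtain ⟨hUU, hU2, hW1, hW2, hsum⟩ := hy
    dsimp only
    simp only [Prod.mk.injEq]
    refine ⟨⟨?_, ?_⟩, ?_, ?_⟩ <;> first | trivial | omega
  · rintro ⟨⟨u₁, v₁⟩, u₂, v₂⟩ hx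
    rw [mem_filter, mem_Q] at hx
    dsimp only at hx
    obtain ⟨⟨hu₁, hv₁, hu₂, hv₂, hsum⟩, hlt⟩ := hx
    dsimp only
    simp only [Prod.mk.injEq]
    refine ⟨⟨?_, ?_⟩, ?_, ?_⟩ <;> first | trivial | omega
  · rintro ⟨⟨U₁, U₂⟩, W₁, W₂⟩ hy
    rw [mem_P2] at hy
    dsimp only at hy
    obtain ⟨hUU, hU2, hW1, hW2, hsum⟩ := hy
    rw [FF]
    dsimp only
    have hcast : ((W₁ + W₂ : ℕ) : ℂ) = (W₁ : ℂ) + (W₂ : ℂ) := by push_cast; ring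
    rw [hcast]
    congr 1
    apply rootN_pow_congr N hN
    calc (α+β).val * W₁ + β.val * W₂
        ≡ (α.val + β.val) * W₁ + β.val * W₂ [MOD N] :=
          Nat.ModEq.add_right _ (Nat.ModEq.mul_right _ (val_add_modeq α β))
      _ = α.val * W₁ + β.val * (W₁ + W₂) := by ring

lemma gt_part (N k₁ k₂ : ℕ) (hN : 0 < N) (α β : ZMod N) (n : ℕ) :
    ∑ x ∈ (Q n).filter (fun x => x.2.2 < x.1.2), FF N k₁ k₂ α β x
      = ∑ j ∈ range (k₁+k₂+1), wcoef k₂ k₁ j * c2 N j (k₁+k₂-j) (α+β) α n := by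
  haveI : NeZero N := ⟨hN.ne'⟩
  have hrange : k₁ + k₂ = k₂ + k₁ := by ring
  have hrhs : ∑ j ∈ range (k₁+k₂+1), wcoef k₂ k₁ j * c2 N j (k₁+k₂-j) (α+β) α n
      = ∑ y ∈ P2 n, rootN N ^ ((α+β).val * y.2.1 + α.val * y.2.2) *
          ((y.2.1 : ℂ) ^ k₂ * ((y.2.1 : ℂ) + (y.2.2 : ℂ)) ^ k₁) := by
    simp only [c2, Finset.mul_sum]
    rw [Finset.sum_comm]
    apply Finset.sum_congr rfl
    intro y hy
    have : ∀ j, wcoef k₂ k₁ j * (rootN N ^ ((α+β).val * y.2.1 + α.val * y.2.2) *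
        ((y.2.1 : ℂ) ^ j * (y.2.2 : ℂ) ^ (k₁+k₂-j)))
        = rootN N ^ ((α+β).val * y.2.1 + α.val * y.2.2) *
          (wcoef k₂ k₁ j * ((y.2.1 : ℂ) ^ j * (y.2.2 : ℂ) ^ (k₂+k₁-j))) := fun j => by
      rw [hrange]
      ring
    rw [funext this, ← Finset.mul_sum, hrange, binom_key]
  rw [hrhs]
  symm
  apply Finset.sum_nbij' (i := fun y => ((y.1.2, y.2.1 + y.2.2), (y.1.1 - y.1.2, y.2.1)))
    (j := fun x => ((x.2.1 + x.1.1, x.1.1), (x.2.2, x.1.2 - x.2.2)))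
  · rintro ⟨⟨U₁, U₂⟩, W₁, W₂⟩ hy
    rw [mem_P2] at hy
    dsimp only at hy
    obtain ⟨hUU, hU2, hW1, hW2, hsum⟩ := hy
    rw [mem_filter, mem_Q]
    dsimp only
    have key : U₂ * (W₁ + W₂) + (U₁ - U₂) * W₁ = U₁ * W₁ + U₂ * W₂ := by
      obtain ⟨t, ht⟩ : ∃ t, U₁ = U₂ + t := ⟨U₁ - U₂, by omega⟩
      subst ht
      have h : U₂ + t - U₂ = t := by omega
      rw [h]; ring
    exact ⟨⟨hU2, by omega, by omega, hW1, by omega⟩, by omega⟩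
  · rintro ⟨⟨u₁, v₁⟩, u₂, v₂⟩ hx
    rw [mem_filter, mem_Q] at hx
    dsimp only at hx
    obtain ⟨⟨hu₁, hv₁, hu₂, hv₂, hsum⟩, hgt⟩ := hx
    rw [mem_P2]
    dsimp only
    have key : (u₂ + u₁) * v₂ + u₁ * (v₁ - v₂) = u₁ * v₁ + u₂ * v₂ := by
      obtain ⟨w, hw⟩ : ∃ w, v₁ = v₂ + w := ⟨v₁ - v₂, by omega⟩
      subst hw
      have h : v₂ + w - v₂ = w := by omega
      rw [h]; ring
    exact ⟨by omega, hu₁, hv₂, by omega, by omega⟩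
  · rintro ⟨⟨U₁, U₂⟩, W₁, W₂⟩ hy
    rw [mem_P2] at hy
    dsimp only at hy
    obtain ⟨hUU, hU2, hW1, hW2, hsum⟩ := hy
    dsimp only
    simp only [Prod.mk.injEq]
    refine ⟨⟨?_, ?_⟩, ?_, ?_⟩ <;> first | trivial | omega
  · rintro ⟨⟨u₁, v₁⟩, u₂, v₂⟩ hx
    rw [mem_filter, mem_Q] at hx
    dsimp only at hx
    obtain ⟨⟨hu₁, hv₁, hu₂, hv₂, hsum⟩, hgt⟩ := hx
    dsimp only
    simp only [Prod.mk.injEq]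
    refine ⟨⟨?_, ?_⟩, ?_, ?_⟩ <;> first | trivial | omega
  · rintro ⟨⟨U₁, U₂⟩, W₁, W₂⟩ hy
    rw [mem_P2] at hy
    dsimp only at hy
    obtain ⟨hUU, hU2, hW1, hW2, hsum⟩ := hy
    rw [FF]
    dsimp only
    have hcast : ((W₁ + W₂ : ℕ) : ℂ) = (W₁ : ℂ) + (W₂ : ℂ) := by push_cast; ring
    rw [hcast]
    have hterm : ((W₁:ℂ) + (W₂:ℂ)) ^ k₁ * (W₁:ℂ) ^ k₂ = (W₁:ℂ) ^ k₂ * ((W₁:ℂ) + (W₂:ℂ)) ^ k₁ := by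
      ring
    rw [← hterm]
    congr 1
    apply rootN_pow_congr N hN
    calc (α+β).val * W₁ + α.val * W₂
        ≡ (α.val + β.val) * W₁ + α.val * W₂ [MOD N] :=
          Nat.ModEq.add_right _ (Nat.ModEq.mul_right _ (val_add_modeq α β))
      _ = α.val * (W₁ + W₂) + β.val * W₁ := by ring

end Stmt14
namespace Stmt14
open Finset

lemma eq_part (N k₁ k₂ : ℕ) (hN : 0 < N) (hk : 1 ≤ k₁ + k₂) (α β : ZMod N) (n : ℕ) :
    ∑ x ∈ (Q n).filter (fun x => x.1.2 = x.2.2), FF N k₁ k₂ α β x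
        + c1 N (k₁+k₂) (α+β) n
      = (n : ℂ) * c1 N (k₁+k₂-1) (α+β) n := by
  haveI : NeZero N := ⟨hN.ne'⟩
  have step1 : ∑ x ∈ (Q n).filter (fun x => x.1.2 = x.2.2), FF N k₁ k₂ α β x
      = ∑ z ∈ (P1 n).sigma (fun p => Ioo 0 p.1),
          rootN N ^ ((α+β).val * z.1.2) * (z.1.2 : ℂ) ^ (k₁+k₂) := by
    apply Finset.sum_nbij' (i := fun x => (⟨(x.1.1 + x.2.1, x.1.2), x.1.1⟩ :
        Σ _p : ℕ × ℕ, ℕ))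
      (j := fun z => ((z.2, z.1.2), (z.1.1 - z.2, z.1.2)))
    · rintro ⟨⟨u₁, v₁⟩, u₂, v₂⟩ hx
      rw [mem_filter, mem_Q] at hx
      dsimp only at hx
      obtain ⟨⟨hu₁, hv₁, hu₂, hv₂, hsum⟩, heq⟩ := hx
      rw [mem_sigma, mem_P1, mem_Ioo]
      dsimp only
      subst heq
      have key : u₁ * v₁ + u₂ * v₁ = (u₁ + u₂) * v₁ := by ring
      exact ⟨⟨by omega, hv₁, by omega⟩, hu₁, by omega⟩
    · rintro ⟨⟨u, v⟩, t⟩ hz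
      rw [mem_sigma, mem_P1, mem_Ioo] at hz
      dsimp only at hz
      obtain ⟨⟨hu, hv, hn⟩, ht0, htu⟩ := hz
      rw [mem_filter, mem_Q]
      dsimp only
      have key : t * v + (u - t) * v = u * v := by
        obtain ⟨w, hw⟩ : ∃ w, u = t + w := ⟨u - t, by omega⟩
        subst hw
        have h : t + w - t = w := by omega
        rw [h]; ring
      exact ⟨⟨ht0, hv, by omega, hv, by omega⟩, rfl⟩
    · rintro ⟨⟨u₁, v₁⟩, u₂, v₂⟩ hx
      rw [mem_filter, mem_Q] at hx
      dsimp only at hx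
      obtain ⟨⟨hu₁, hv₁, hu₂, hv₂, hsum⟩, heq⟩ := hx
      dsimp only at heq ⊢
      subst heq
      have h : u₁ + u₂ - u₁ = u₂ := by omega
      rw [h]
    · rintro ⟨⟨u, v⟩, t⟩ hz
      rw [mem_sigma, mem_P1, mem_Ioo] at hz
      dsimp only at hz
      obtain ⟨⟨hu, hv, hn⟩, ht0, htu⟩ := hz
      dsimp only
      have h : t + (u - t) = u := by omega
      rw [h]
    · rintro ⟨⟨u₁, v₁⟩, u₂, v₂⟩ hx
      rw [mem_filter, mem_Q] at hx
      dsimp only at hx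
      obtain ⟨⟨hu₁, hv₁, hu₂, hv₂, hsum⟩, heq⟩ := hx
      try dsimp only at heq
      subst heq
      rw [FF]
      try dsimp only
      have : (v₁:ℂ) ^ k₁ * (v₁:ℂ) ^ k₂ = (v₁:ℂ) ^ (k₁+k₂) := by rw [pow_add]
      rw [this]
      congr 1
      apply rootN_pow_congr N hN
      calc α.val * v₁ + β.val * v₁ = (α.val + β.val) * v₁ := by ring
        _ ≡ (α+β).val * v₁ [MOD N] := Nat.ModEq.mul_right _ (val_add_modeq α β).symm
  rw [step1, Finset.sum_sigma]
  have step2 : ∀ p ∈ P1 n, (∑ _t ∈ Ioo 0 p.1,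
        rootN N ^ ((α+β).val * p.2) * (p.2 : ℂ) ^ (k₁+k₂))
      = ((p.1 - 1 : ℕ) : ℂ) * (rootN N ^ ((α+β).val * p.2) * (p.2 : ℂ) ^ (k₁+k₂)) := by
    intro p hp
    rw [Finset.sum_const, Nat.card_Ioo, nsmul_eq_mul]
    norm_num
  rw [Finset.sum_congr rfl step2, c1, c1, ← Finset.sum_add_distrib, Finset.mul_sum]
  apply Finset.sum_congr rfl
  intro p hp
  rw [mem_P1] at hp
  obtain ⟨hu, hv, hn⟩ := hp
  have hc : ((p.1 - 1 : ℕ) : ℂ) = (p.1 : ℂ) - 1 := by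
    push_cast [hu]
    ring
  have hpow : (p.2 : ℂ) ^ (k₁+k₂) = (p.2 : ℂ) ^ (k₁+k₂-1) * (p.2 : ℂ) := by
    have h : k₁ + k₂ = (k₁ + k₂ - 1) + 1 := by omega
    rw [h]
    rw [pow_succ]
    congr 1 <;> omega
  have hcn : (n : ℂ) = (p.1 : ℂ) * (p.2 : ℂ) := by
    rw [← hn]
    push_cast
    ring
  rw [hc, hpow, hcn]
  ring

/-- the key coefficient identity -/
lemma core (N k₁ k₂ : ℕ) (hN : 0 < N) (hk : 1 ≤ k₁ + k₂) (α β : ZMod N) (n : ℕ) :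
    (n : ℂ) * c1 N (k₁+k₂-1) (α+β) n
      = ∑ ij ∈ antidiagonal n, c1 N k₁ α ij.1 * c1 N k₂ β ij.2
        + c1 N (k₁+k₂) (α+β) n
        - ∑ j ∈ range (k₁+k₂+1), (wcoef k₁ k₂ j * c2 N j (k₁+k₂-j) (α+β) β n
            + wcoef k₂ k₁ j * c2 N j (k₁+k₂-j) (α+β) α n) := by
  have h1 := conv_eq N k₁ k₂ α β n
  have h2 := Q_split N k₁ k₂ α β n
  have h3 := lt_part N k₁ k₂ hN α β n
  have h4 := gt_part N k₁ k₂ hN α β n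
  have h5 := eq_part N k₁ k₂ hN hk α β n
  rw [Finset.sum_add_distrib]
  linear_combination (-1 : ℂ) * h5 - h1 - h2 - h3 - h4

end Stmt14
namespace Stmt14
open Finset

lemma w_eq (k₁ k₂ j : ℕ) (hj : j ≤ k₁ + k₂) :
    (Nat.choose j k₁ : ℂ) * (((j.factorial : ℂ)) * (((k₁+k₂-j).factorial : ℂ)))⁻¹
      = wcoef k₁ k₂ j * (((k₁.factorial : ℂ)) * ((k₂.factorial : ℂ)))⁻¹ := by
  by_cases h : k₁ ≤ j
  · rw [wcoef, if_pos h]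
    have hA : j.choose k₁ * k₁.factorial * (j - k₁).factorial = j.factorial :=
      Nat.choose_mul_factorial_mul_factorial h
    have hjk : j - k₁ ≤ k₂ := by omega
    have hB : k₂.choose (j - k₁) * (j - k₁).factorial * (k₂ - (j - k₁)).factorial
        = k₂.factorial := Nat.choose_mul_factorial_mul_factorial hjk
    have hC : k₂ - (j - k₁) = k₁ + k₂ - j := by omega
    rw [hC] at hB
    have key : j.choose k₁ * k₁.factorial * k₂.factorial * (j - k₁).factorial
        = k₂.choose (j - k₁) * j.factorial * (k₁+k₂-j).factorial * (j - k₁).factorial := by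
      calc j.choose k₁ * k₁.factorial * k₂.factorial * (j - k₁).factorial
          = (j.choose k₁ * k₁.factorial * (j - k₁).factorial) * k₂.factorial := by ring
        _ = j.factorial * (k₂.choose (j - k₁) * (j - k₁).factorial * (k₁+k₂-j).factorial) := by
            rw [hA, hB]
        _ = _ := by ring
    have key2 : j.choose k₁ * k₁.factorial * k₂.factorial
        = k₂.choose (j - k₁) * j.factorial * (k₁+k₂-j).factorial :=
      Nat.eq_of_mul_eq_mul_right (Nat.factorial_pos _) key
    have keyC : (j.choose k₁ : ℂ) * (k₁.factorial : ℂ) * (k₂.factorial : ℂ)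
        = (k₂.choose (j - k₁) : ℂ) * (j.factorial : ℂ) * ((k₁+k₂-j).factorial : ℂ) := by
      exact_mod_cast congrArg (Nat.cast : ℕ → ℂ) key2
    have f1 : ((j.factorial : ℂ)) ≠ 0 := Nat.cast_ne_zero.2 (Nat.factorial_pos _).ne'
    have f2 : (((k₁+k₂-j).factorial : ℂ)) ≠ 0 := Nat.cast_ne_zero.2 (Nat.factorial_pos _).ne'
    have f3 : ((k₁.factorial : ℂ)) ≠ 0 := Nat.cast_ne_zero.2 (Nat.factorial_pos _).ne'
    have f4 : ((k₂.factorial : ℂ)) ≠ 0 := Nat.cast_ne_zero.2 (Nat.factorial_pos _).ne'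
    field_simp
    linear_combination keyC
  · rw [wcoef, if_neg h, Nat.choose_eq_zero_of_lt (by omega)]
    simp

lemma S2 (k₁ k₂ : ℕ) :
    ((k₁+k₂).choose k₁ : ℂ) * ((((k₁+k₂).factorial : ℂ)))⁻¹
      = (((k₁.factorial : ℂ)) * ((k₂.factorial : ℂ)))⁻¹ := by
  have h : (k₁+k₂).choose k₁ * k₁.factorial * (k₁ + k₂ - k₁).factorial = (k₁+k₂).factorial :=
    Nat.choose_mul_factorial_mul_factorial (by omega)
  have hC : k₁ + k₂ - k₁ = k₂ := by omega
  rw [hC] at h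
  have keyC : ((k₁+k₂).choose k₁ : ℂ) * (k₁.factorial : ℂ) * (k₂.factorial : ℂ)
      = ((k₁+k₂).factorial : ℂ) := by exact_mod_cast congrArg (Nat.cast : ℕ → ℂ) h
  have f1 : (((k₁+k₂).factorial : ℂ)) ≠ 0 := Nat.cast_ne_zero.2 (Nat.factorial_pos _).ne'
  have f3 : ((k₁.factorial : ℂ)) ≠ 0 := Nat.cast_ne_zero.2 (Nat.factorial_pos _).ne'
  have f4 : ((k₂.factorial : ℂ)) ≠ 0 := Nat.cast_ne_zero.2 (Nat.factorial_pos _).ne'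
  field_simp
  linear_combination keyC

lemma S1 (k₁ k₂ : ℕ) (hkk : 1 ≤ k₁ + k₂) :
    ((k₁+k₂).choose k₁ : ℂ) * ((((k₁+k₂-1).factorial : ℂ)))⁻¹ / ((k₁+k₂ : ℕ) : ℂ)
      = (((k₁.factorial : ℂ)) * ((k₂.factorial : ℂ)))⁻¹ := by
  have h : (k₁+k₂) * (k₁+k₂-1).factorial = (k₁+k₂).factorial :=
    Nat.mul_factorial_pred (by omega)
  have keyC : ((k₁+k₂ : ℕ) : ℂ) * ((k₁+k₂-1).factorial : ℂ) = ((k₁+k₂).factorial : ℂ) := by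
    exact_mod_cast congrArg (Nat.cast : ℕ → ℂ) h
  rw [← S2 k₁ k₂, ← keyC, mul_inv]
  ring

lemma norm_conv_le (N k₁ k₂ : ℕ) (A B : ZMod N) (n : ℕ) :
    ‖∑ ij ∈ antidiagonal n, c1 N k₁ A ij.1 * c1 N k₂ B ij.2‖
      ≤ ((n+1 : ℕ) : ℝ) ^ (k₁+k₂+5) := by
  have hle : ∀ ij ∈ antidiagonal n, ‖c1 N k₁ A ij.1 * c1 N k₂ B ij.2‖
      ≤ ((n+1:ℕ):ℝ) ^ (k₁+2) * ((n+1:ℕ):ℝ) ^ (k₂+2) := by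
    intro ij hij
    rw [Finset.HasAntidiagonal.mem_antidiagonal] at hij
    rw [norm_mul]
    have h1 : ‖c1 N k₁ A ij.1‖ ≤ ((n+1:ℕ):ℝ) ^ (k₁+2) := by
      refine le_trans (norm_c1_le N k₁ A ij.1) ?_
      apply pow_le_pow_left₀ (by positivity)
      have h : ij.1 + 1 ≤ n + 1 := by omega
      exact_mod_cast h
    have h2 : ‖c1 N k₂ B ij.2‖ ≤ ((n+1:ℕ):ℝ) ^ (k₂+2) := by
      refine le_trans (norm_c1_le N k₂ B ij.2) ?_
      apply pow_le_pow_left₀ (by positivity)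
      have h : ij.2 + 1 ≤ n + 1 := by omega
      exact_mod_cast h
    exact mul_le_mul h1 h2 (norm_nonneg _) (by positivity)
  calc ‖∑ ij ∈ antidiagonal n, c1 N k₁ A ij.1 * c1 N k₂ B ij.2‖
      ≤ ∑ ij ∈ antidiagonal n, ‖c1 N k₁ A ij.1 * c1 N k₂ B ij.2‖ := norm_sum_le _ _
    _ ≤ ∑ _ij ∈ antidiagonal n, ((n+1:ℕ):ℝ) ^ (k₁+2) * ((n+1:ℕ):ℝ) ^ (k₂+2) :=
        Finset.sum_le_sum hle
    _ = ((n+1:ℕ):ℝ) * (((n+1:ℕ):ℝ) ^ (k₁+2) * ((n+1:ℕ):ℝ) ^ (k₂+2)) := by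
        rw [Finset.sum_const, Finset.Nat.card_antidiagonal, nsmul_eq_mul]
        try push_cast
        try ring
    _ = _ := by rw [← pow_add, ← pow_succ']; ring_nf

lemma summable_W {q : ℂ} (hq' : ‖q‖ < 1) (N k₁ k₂ j : ℕ) (A B : ZMod N) :
    Summable (fun n : ℕ => (wcoef k₁ k₂ j * c2 N j (k₁+k₂-j) (A+B) B n
      + wcoef k₂ k₁ j * c2 N j (k₁+k₂-j) (A+B) A n) * q ^ n) := by
  apply Summable.congr (((summable_c2 hq' N j (k₁+k₂-j) (A+B) B).mul_left
    (wcoef k₁ k₂ j)).add ((summable_c2 hq' N j (k₁+k₂-j) (A+B) A).mul_left (wcoef k₂ k₁ j)))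
  intro n
  ring

lemma tsum_core {q : ℂ} (hq' : ‖q‖ < 1) (N k₁ k₂ : ℕ) (hN : 0 < N) (hkk : 1 ≤ k₁ + k₂)
    (A B : ZMod N) :
    ∑' n : ℕ, (n : ℂ) * c1 N (k₁+k₂-1) (A+B) n * q ^ n
      = (∑' n : ℕ, c1 N k₁ A n * q ^ n) * (∑' n : ℕ, c1 N k₂ B n * q ^ n)
        + ∑' n : ℕ, c1 N (k₁+k₂) (A+B) n * q ^ n
        - ∑ j ∈ range (k₁+k₂+1), ∑' n : ℕ,
            ((wcoef k₁ k₂ j * c2 N j (k₁+k₂-j) (A+B) B n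
              + wcoef k₂ k₁ j * c2 N j (k₁+k₂-j) (A+B) A n) * q ^ n) := by
  have hprod : (∑' n : ℕ, c1 N k₁ A n * q ^ n) * (∑' n : ℕ, c1 N k₂ B n * q ^ n)
      = ∑' n : ℕ, (∑ ij ∈ antidiagonal n, c1 N k₁ A ij.1 * c1 N k₂ B ij.2) * q ^ n := by
    rw [tsum_mul_tsum_eq_tsum_sum_antidiagonal_of_summable_norm
      (summable_c1_norm hq' N k₁ A) (summable_c1_norm hq' N k₂ B)]
    apply tsum_congr
    intro n
    rw [Finset.sum_mul]
    apply Finset.sum_congr rfl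
    intro ij hij
    rw [Finset.HasAntidiagonal.mem_antidiagonal] at hij
    rw [mul_mul_mul_comm, ← pow_add, hij]
  have hswap : ∑ j ∈ range (k₁+k₂+1), ∑' n : ℕ,
      ((wcoef k₁ k₂ j * c2 N j (k₁+k₂-j) (A+B) B n
        + wcoef k₂ k₁ j * c2 N j (k₁+k₂-j) (A+B) A n) * q ^ n)
      = ∑' n : ℕ, ∑ j ∈ range (k₁+k₂+1),
          ((wcoef k₁ k₂ j * c2 N j (k₁+k₂-j) (A+B) B n
            + wcoef k₂ k₁ j * c2 N j (k₁+k₂-j) (A+B) A n) * q ^ n) :=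
    (Summable.tsum_finsetSum (fun j _ => summable_W hq' N k₁ k₂ j A B)).symm
  rw [hprod, hswap]
  have hconv : Summable (fun n : ℕ =>
      (∑ ij ∈ antidiagonal n, c1 N k₁ A ij.1 * c1 N k₂ B ij.2) * q ^ n) :=
    summable_of_bound' hq' (norm_conv_le N k₁ k₂ A B)
  have hc1k : Summable (fun n : ℕ => c1 N (k₁+k₂) (A+B) n * q ^ n) :=
    summable_c1 hq' N (k₁+k₂) (A+B)
  have hW : Summable (fun n : ℕ => ∑ j ∈ range (k₁+k₂+1),
      ((wcoef k₁ k₂ j * c2 N j (k₁+k₂-j) (A+B) B n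
        + wcoef k₂ k₁ j * c2 N j (k₁+k₂-j) (A+B) A n) * q ^ n)) :=
    summable_sum (fun j _ => summable_W hq' N k₁ k₂ j A B)
  rw [← Summable.tsum_add hconv hc1k, ← Summable.tsum_sub (hconv.add hc1k) hW]
  apply tsum_congr
  intro n
  have hcore := core N k₁ k₂ hN hkk A B n
  have hsm : ∑ j ∈ range (k₁+k₂+1),
      ((wcoef k₁ k₂ j * c2 N j (k₁+k₂-j) (A+B) B n
        + wcoef k₂ k₁ j * c2 N j (k₁+k₂-j) (A+B) A n) * q ^ n)
      = (∑ j ∈ range (k₁+k₂+1), (wcoef k₁ k₂ j * c2 N j (k₁+k₂-j) (A+B) B n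
        + wcoef k₂ k₁ j * c2 N j (k₁+k₂-j) (A+B) A n)) * q ^ n := by
    rw [Finset.sum_mul]
  rw [hsm]
  linear_combination hcore * q ^ n

end Stmt14
namespace Stmt14
open Finset

lemma merge_j {q : ℂ} (hq' : ‖q‖ < 1) (N k₁ k₂ j : ℕ) (A B : ZMod N) :
    wcoef k₁ k₂ j * ∑' n : ℕ, c2 N j (k₁+k₂-j) (A+B) B n * q ^ n
      + wcoef k₂ k₁ j * ∑' n : ℕ, c2 N j (k₁+k₂-j) (A+B) A n * q ^ n
    = ∑' n : ℕ, ((wcoef k₁ k₂ j * c2 N j (k₁+k₂-j) (A+B) B n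
        + wcoef k₂ k₁ j * c2 N j (k₁+k₂-j) (A+B) A n) * q ^ n) := by
  rw [← tsum_mul_left, ← tsum_mul_left,
    ← Summable.tsum_add ((summable_c2 hq' N j (k₁+k₂-j) (A+B) B).mul_left (wcoef k₁ k₂ j))
      ((summable_c2 hq' N j (k₁+k₂-j) (A+B) A).mul_left (wcoef k₂ k₁ j))]
  apply tsum_congr
  intro n
  ring


end Stmt14

open Stmt14 Finset

theorem stmt_14 (N : ℕ) (hN : 0 < N) (s₁ s₂ : ℕ) (h1 : 1 ≤ s₁) (h2 : 1 ≤ s₂)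
    (h3 : 2 < s₁ + s₂) (α β : ℤ) (q : ℂ) (hq : ‖q‖ < 1) :
    (Nat.choose (s₁ + s₂ - 2) (s₁ - 1) : ℂ) *
        Dmdf N 1 ![s₁ + s₂ - 2] ![((α + β : ℤ) : ZMod N)] q / ((s₁ + s₂ - 2 : ℕ) : ℂ)
      = mdf N 1 ![s₁] ![(α : ZMod N)] q * mdf N 1 ![s₂] ![(β : ZMod N)] q
        + (Nat.choose (s₁ + s₂ - 2) (s₁ - 1) : ℂ) *
            mdf N 1 ![s₁ + s₂ - 1] ![((α + β : ℤ) : ZMod N)] q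
        - ∑ a ∈ Finset.Icc 1 (s₁ + s₂ - 1),
            ((Nat.choose (a - 1) (s₁ - 1) : ℂ) *
                mdf N 2 ![a, s₁ + s₂ - a] ![((α + β : ℤ) : ZMod N), (β : ZMod N)] q
              + (Nat.choose (a - 1) (s₂ - 1) : ℂ) *
                mdf N 2 ![a, s₁ + s₂ - a] ![((α + β : ℤ) : ZMod N), (α : ZMod N)] q) := by
  have hq' : ‖q‖ < 1 := by exact hq
  have hkk : 1 ≤ (s₁ - 1) + (s₂ - 1) := by omega
  have hs12 : s₁ + s₂ - 2 = (s₁ - 1) + (s₂ - 1) := by omega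
  have hs11 : s₁ + s₂ - 1 = (s₁ - 1) + (s₂ - 1) + 1 := by omega
  have hAB : ((α + β : ℤ) : ZMod N) = ((α : ℤ) : ZMod N) + ((β : ℤ) : ZMod N) := by
    push_cast
    ring
  rw [hAB, hs12, hs11]
  -- rewrite the inner sum over `a`
  have hsum_rw : ∑ a ∈ Finset.Icc 1 ((s₁ - 1) + (s₂ - 1) + 1),
      ((Nat.choose (a - 1) (s₁ - 1) : ℂ) *
          mdf N 2 ![a, s₁ + s₂ - a] ![((α : ℤ) : ZMod N) + ((β : ℤ) : ZMod N), ((β : ℤ) : ZMod N)] q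
        + (Nat.choose (a - 1) (s₂ - 1) : ℂ) *
          mdf N 2 ![a, s₁ + s₂ - a] ![((α : ℤ) : ZMod N) + ((β : ℤ) : ZMod N), ((α : ℤ) : ZMod N)] q)
      = ∑ j ∈ range ((s₁ - 1) + (s₂ - 1) + 1),
          ((((s₁-1).factorial : ℂ) * ((s₂-1).factorial : ℂ))⁻¹ *
            ∑' n : ℕ, ((wcoef (s₁-1) (s₂-1) j *
                c2 N j ((s₁-1)+(s₂-1)-j) (((α : ℤ) : ZMod N) + ((β : ℤ) : ZMod N)) ((β : ℤ) : ZMod N) n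
              + wcoef (s₂-1) (s₁-1) j *
                c2 N j ((s₁-1)+(s₂-1)-j) (((α : ℤ) : ZMod N) + ((β : ℤ) : ZMod N)) ((α : ℤ) : ZMod N) n) * q ^ n)) := by
    rw [← Finset.Ico_add_one_right_eq_Icc, Finset.sum_Ico_eq_sum_range]
    have hlen : (s₁ - 1) + (s₂ - 1) + 1 + 1 - 1 = (s₁ - 1) + (s₂ - 1) + 1 := by omega
    rw [hlen]
    apply Finset.sum_congr rfl
    intro j hj
    rw [mem_range] at hj
    rw [mdf_two_eq hq' N (1 + j) (s₁ + s₂ - (1 + j)), mdf_two_eq hq' N (1 + j) (s₁ + s₂ - (1 + j))]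
    have ha1 : 1 + j - 1 = j := by omega
    have he2 : s₁ + s₂ - (1 + j) - 1 = (s₁-1) + (s₂-1) - j := by omega
    rw [ha1, he2]
    have e1 : (Nat.choose j (s₁-1) : ℂ) *
        (((j.factorial : ℂ) * (((s₁-1)+(s₂-1)-j).factorial : ℂ))⁻¹ *
          ∑' n : ℕ, c2 N j ((s₁-1)+(s₂-1)-j) (((α : ℤ) : ZMod N) + ((β : ℤ) : ZMod N)) ((β : ℤ) : ZMod N) n * q ^ n)
        = wcoef (s₁-1) (s₂-1) j * ((((s₁-1).factorial : ℂ) * ((s₂-1).factorial : ℂ))⁻¹ *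
          ∑' n : ℕ, c2 N j ((s₁-1)+(s₂-1)-j) (((α : ℤ) : ZMod N) + ((β : ℤ) : ZMod N)) ((β : ℤ) : ZMod N) n * q ^ n) := by
      rw [← mul_assoc, w_eq (s₁-1) (s₂-1) j (by omega), mul_assoc]
    have e2 : (Nat.choose j (s₂-1) : ℂ) *
        (((j.factorial : ℂ) * (((s₁-1)+(s₂-1)-j).factorial : ℂ))⁻¹ *
          ∑' n : ℕ, c2 N j ((s₁-1)+(s₂-1)-j) (((α : ℤ) : ZMod N) + ((β : ℤ) : ZMod N)) ((α : ℤ) : ZMod N) n * q ^ n)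
        = wcoef (s₂-1) (s₁-1) j * ((((s₂-1).factorial : ℂ) * ((s₁-1).factorial : ℂ))⁻¹ *
          ∑' n : ℕ, c2 N j ((s₁-1)+(s₂-1)-j) (((α : ℤ) : ZMod N) + ((β : ℤ) : ZMod N)) ((α : ℤ) : ZMod N) n * q ^ n) := by
      have hcomm : (s₁-1) + (s₂-1) - j = (s₂-1) + (s₁-1) - j := by omega
      rw [← mul_assoc]
      rw [show ((j.factorial : ℂ) * (((s₁-1)+(s₂-1)-j).factorial : ℂ))
          = ((j.factorial : ℂ) * (((s₂-1)+(s₁-1)-j).factorial : ℂ)) by rw [← hcomm]]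
      rw [w_eq (s₂-1) (s₁-1) j (by omega), mul_assoc]
    rw [e1, e2]
    have hmj := merge_j hq' N (s₁-1) (s₂-1) j (((α : ℤ) : ZMod N)) (((β : ℤ) : ZMod N))
    calc wcoef (s₁-1) (s₂-1) j * ((((s₁-1).factorial : ℂ) * ((s₂-1).factorial : ℂ))⁻¹ * _)
          + wcoef (s₂-1) (s₁-1) j * ((((s₂-1).factorial : ℂ) * ((s₁-1).factorial : ℂ))⁻¹ * _)
        = (((s₁-1).factorial : ℂ) * ((s₂-1).factorial : ℂ))⁻¹ *
            (wcoef (s₁-1) (s₂-1) j * ∑' n : ℕ, c2 N j ((s₁-1)+(s₂-1)-j) (((α : ℤ) : ZMod N) + ((β : ℤ) : ZMod N)) ((β : ℤ) : ZMod N) n * q ^ n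
              + wcoef (s₂-1) (s₁-1) j * ∑' n : ℕ, c2 N j ((s₁-1)+(s₂-1)-j) (((α : ℤ) : ZMod N) + ((β : ℤ) : ZMod N)) ((α : ℤ) : ZMod N) n * q ^ n) := by
          ring
      _ = _ := by rw [hmj]
  rw [hsum_rw, Dmdf_one_eq hq', mdf_one_eq hq', mdf_one_eq hq', mdf_one_eq hq']
  have hd : (s₁ - 1) + (s₂ - 1) + 1 - 1 = (s₁ - 1) + (s₂ - 1) := by omega
  rw [hd]
  rw [tsum_core hq' N (s₁-1) (s₂-1) hN hkk (((α : ℤ) : ZMod N)) (((β : ℤ) : ZMod N))]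
  rw [← Finset.mul_sum]
  have hS1 := S1 (s₁-1) (s₂-1) hkk
  have hS2 := S2 (s₁-1) (s₂-1)
  set U₁ := ∑' n : ℕ, c1 N (s₁-1) ((α : ℤ) : ZMod N) n * q ^ n with hU₁
  set U₂ := ∑' n : ℕ, c1 N (s₂-1) ((β : ℤ) : ZMod N) n * q ^ n with hU₂
  set V := ∑' n : ℕ, c1 N ((s₁-1)+(s₂-1)) (((α : ℤ) : ZMod N) + ((β : ℤ) : ZMod N)) n * q ^ n with hV
  set S := ∑ j ∈ range ((s₁-1)+(s₂-1)+1), ∑' n : ℕ,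
      ((wcoef (s₁-1) (s₂-1) j * c2 N j ((s₁-1)+(s₂-1)-j) (((α : ℤ) : ZMod N) + ((β : ℤ) : ZMod N)) ((β : ℤ) : ZMod N) n
        + wcoef (s₂-1) (s₁-1) j * c2 N j ((s₁-1)+(s₂-1)-j) (((α : ℤ) : ZMod N) + ((β : ℤ) : ZMod N)) ((α : ℤ) : ZMod N) n) * q ^ n) with hS
  linear_combination (U₁ * U₂ + V - S) * hS1 - V * hS2

end
end

section
/- The following two identities of absolutely convergent double series over pairs of integers m > n > 0 hold: (i) 3·Σ_{m>n>0} (−1)^m/(m²n) = Σ_{m>n>0} 1/(m²n) + Σ_{m>n>0} (−1)^n/(m²n) + Σ_{m>n>0} (−1)^{m+n}/(m²n); (ii) 2·Σ_{m>n>0} 1/(m³n) = 2·Σ_{m>n>0} (−1)^m/(m³n) + Σ_{m>n>0} (−1)^m/(m²n²) − Σ_{m>n>0} (−1)^{m+n}/(m²n²). -/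
open scoped BigOperators

noncomputable section

/-- The double sum `Σ_{m > n > 0} f m n` (as a `tsum` over `ℕ × ℕ`). -/
def dsum (f : ℕ → ℕ → ℝ) : ℝ :=
  ∑' p : ℕ × ℕ, if p.1 > p.2 ∧ p.2 > 0 then f p.1 p.2 else 0

namespace Euler19

open Function Finset Filter






def b3 (q : ℕ × ℕ) : ℝ := 1 / (((q.1 : ℝ) + q.2 + 2) ^ 2 * ((q.2 : ℝ) + 1))
def g3 (q : ℕ × ℕ) : ℝ := 1 / (((q.1 : ℝ) + 1) * (((q.2 : ℝ) + 1) * ((q.1 : ℝ) + q.2 + 2)))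
def r3 (q : ℕ × ℕ) : ℝ := 1 / (4 * ((q.1 : ℝ) + q.2 + 1) ^ 2 * (2 * (q.1 : ℝ) + 1))
def c4 (q : ℕ × ℕ) : ℝ := 1 / (((q.1 : ℝ) + q.2 + 2) ^ 3 * ((q.2 : ℝ) + 1))
def e4 (q : ℕ × ℕ) : ℝ := 1 / (((q.1 : ℝ) + q.2 + 2) ^ 2 * ((q.2 : ℝ) + 1) ^ 2)
def x4 (q : ℕ × ℕ) : ℝ := 1 / (((q.1 : ℝ) + 1) * (((q.2 : ℝ) + 1) * ((q.1 : ℝ) + q.2 + 2) ^ 2))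
def k4 (q : ℕ × ℕ) : ℝ := 1 / (((q.1 : ℝ) + 1) ^ 2 * ((q.2 : ℝ) + 1) ^ 2)
def t4 (q : ℕ × ℕ) : ℝ := 1 / ((2 * (q.1 : ℝ) + 1) ^ 2 * (2 * (q.2 : ℝ) + 1) ^ 2)

lemma b3_nonneg (q : ℕ × ℕ) : 0 ≤ b3 q := by unfold b3; positivity
lemma g3_nonneg (q : ℕ × ℕ) : 0 ≤ g3 q := by unfold g3; positivity
lemma r3_nonneg (q : ℕ × ℕ) : 0 ≤ r3 q := by unfold r3; positivity
lemma c4_nonneg (q : ℕ × ℕ) : 0 ≤ c4 q := by unfold c4; positivity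
lemma e4_nonneg (q : ℕ × ℕ) : 0 ≤ e4 q := by unfold e4; positivity
lemma x4_nonneg (q : ℕ × ℕ) : 0 ≤ x4 q := by unfold x4; positivity

/-! ### Summability -/

lemma prodsum {f g : ℕ → ℝ} (hf : Summable f) (hg : Summable g)
    (hf0 : ∀ n, 0 ≤ f n) (hg0 : ∀ n, 0 ≤ g n) :
    Summable (fun q : ℕ × ℕ => f q.1 * g q.2) := by
  have h : 0 ≤ (fun q : ℕ × ℕ => f q.1 * g q.2) := fun q => mul_nonneg (hf0 _) (hg0 _)
  rw [summable_prod_of_nonneg h]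
  constructor
  · intro a
    simp only
    exact hg.mul_left _
  · simp only
    apply Summable.congr (hf.mul_right (∑' b, g b))
    intro a
    rw [tsum_mul_left]

lemma summable_pow_shift {p : ℕ} (hp : 1 < p) :
    Summable (fun n : ℕ => 1 / ((n : ℝ) + 1) ^ p) := by
  have h := (summable_nat_add_iff 1).mpr (Real.summable_one_div_nat_pow.mpr hp)
  simpa using h

lemma summable_rpow32 : Summable (fun n : ℕ => 1 / ((n : ℝ) + 1) ^ (3/2 : ℝ)) := by
  have h := (summable_nat_add_iff 1).mpr
    (Real.summable_one_div_nat_rpow.mpr (by norm_num : (1:ℝ) < 3/2))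
  simpa using h

lemma summable_odd_pow {p : ℕ} (hp : 1 < p) :
    Summable (fun n : ℕ => 1 / (2 * (n : ℝ) + 1) ^ p) := by
  refine Summable.of_nonneg_of_le (fun n => by positivity) (fun n => ?_) (summable_pow_shift hp)
  have h1 : ((n : ℝ) + 1) ^ p ≤ (2 * (n : ℝ) + 1) ^ p := by
    apply pow_le_pow_left₀ (by positivity)
    have : (0:ℝ) ≤ (n : ℝ) := Nat.cast_nonneg n
    linarith
  exact one_div_le_one_div_of_le (by positivity) h1

lemma rpow_bound {u v : ℝ} (hu : 1 ≤ u) (hv : 1 ≤ v) :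
    u ^ (3/2 : ℝ) * v ^ (3/2 : ℝ) ≤ (u + v) ^ 2 * v := by
  have hu0 : (0:ℝ) < u := by linarith
  have hv0 : (0:ℝ) < v := by linarith
  have huv : (0:ℝ) < u + v := by linarith
  have h1 : u ^ (3/2 : ℝ) ≤ (u + v) ^ (3/2 : ℝ) :=
    Real.rpow_le_rpow hu0.le (by linarith) (by norm_num)
  have h2 : v ^ (1/2 : ℝ) ≤ (u + v) ^ (1/2 : ℝ) :=
    Real.rpow_le_rpow hv0.le (by linarith) (by norm_num)
  have hv32 : v ^ (3/2 : ℝ) = v ^ (1/2 : ℝ) * v := by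
    rw [show (3/2:ℝ) = 1/2 + 1 by norm_num, Real.rpow_add hv0, Real.rpow_one]
  have hsum2 : (u + v) ^ 2 = (u + v) ^ (3/2 : ℝ) * (u + v) ^ (1/2 : ℝ) := by
    rw [← Real.rpow_natCast (u + v) 2, ← Real.rpow_add huv]
    norm_num
  rw [hv32, hsum2]
  calc u ^ (3/2:ℝ) * (v ^ (1/2:ℝ) * v)
      ≤ (u+v) ^ (3/2:ℝ) * ((u+v) ^ (1/2:ℝ) * v) := by
        apply mul_le_mul h1 _ (by positivity) (by positivity)
        exact mul_le_mul_of_nonneg_right h2 hv0.le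
    _ = (u+v) ^ (3/2:ℝ) * (u+v) ^ (1/2:ℝ) * v := by ring

lemma cast_ge_one₁ (q : ℕ × ℕ) : (1:ℝ) ≤ (q.1 : ℝ) + 1 := by
  have : (0:ℝ) ≤ (q.1 : ℝ) := Nat.cast_nonneg _; linarith
lemma cast_ge_one₂ (q : ℕ × ℕ) : (1:ℝ) ≤ (q.2 : ℝ) + 1 := by
  have : (0:ℝ) ≤ (q.2 : ℝ) := Nat.cast_nonneg _; linarith

lemma summable_b3 : Summable b3 := by
  have hprod := prodsum summable_rpow32 summable_rpow32
    (fun n => by positivity) (fun n => by positivity)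
  refine Summable.of_nonneg_of_le b3_nonneg (fun q => ?_) hprod
  have hu := cast_ge_one₁ q
  have hv := cast_ge_one₂ q
  have key := rpow_bound hu hv
  unfold b3
  rw [one_div_mul_one_div]
  apply one_div_le_one_div_of_le (by positivity)
  calc ((q.1:ℝ)+1) ^ (3/2:ℝ) * ((q.2:ℝ)+1) ^ (3/2:ℝ)
      ≤ (((q.1:ℝ)+1) + ((q.2:ℝ)+1)) ^ 2 * ((q.2:ℝ)+1) := key
    _ = ((q.1:ℝ) + q.2 + 2) ^ 2 * ((q.2:ℝ) + 1) := by ring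

lemma summable_k4 : Summable k4 := by
  have hprod := prodsum (summable_pow_shift one_lt_two) (summable_pow_shift one_lt_two)
    (fun n => by positivity) (fun n => by positivity)
  refine hprod.congr fun q => ?_
  unfold k4; rw [one_div_mul_one_div]

lemma summable_of_le_k4 (f : ℕ × ℕ → ℝ) (h0 : ∀ q, 0 ≤ f q) (h : ∀ q, f q ≤ k4 q) :
    Summable f := Summable.of_nonneg_of_le h0 h summable_k4

lemma summable_c4 : Summable c4 := by
  refine summable_of_le_k4 _ c4_nonneg fun q => ?_
  have hu := cast_ge_one₁ q; have hv := cast_ge_one₂ q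
  set x := (q.1 : ℝ); set y := (q.2 : ℝ)
  unfold c4 k4
  apply one_div_le_one_div_of_le (by positivity)
  have hx : (0:ℝ) ≤ x := Nat.cast_nonneg _
  have hy : (0:ℝ) ≤ y := Nat.cast_nonneg _
  calc (x+1)^2 * (y+1)^2
      ≤ (x+y+2)^2 * (y+1)^2 := by gcongr <;> linarith
    _ = ((x+y+2)^2 * (y+1)) * (y+1) := by ring
    _ ≤ ((x+y+2)^2 * (y+1)) * (x+y+2) := by
        apply mul_le_mul_of_nonneg_left (by linarith) (by positivity)
    _ = (x+y+2)^3 * (y+1) := by ring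

lemma summable_e4 : Summable e4 := by
  refine summable_of_le_k4 _ e4_nonneg fun q => ?_
  have hu := cast_ge_one₁ q; have hv := cast_ge_one₂ q
  set x := (q.1 : ℝ); set y := (q.2 : ℝ)
  unfold e4 k4
  apply one_div_le_one_div_of_le (by positivity)
  have hx : (0:ℝ) ≤ x := Nat.cast_nonneg _
  have hy : (0:ℝ) ≤ y := Nat.cast_nonneg _
  gcongr <;> linarith

lemma summable_x4 : Summable x4 := by
  refine summable_of_le_k4 _ x4_nonneg fun q => ?_
  have hu := cast_ge_one₁ q; have hv := cast_ge_one₂ q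
  set x := (q.1 : ℝ); set y := (q.2 : ℝ)
  unfold x4 k4
  apply one_div_le_one_div_of_le (by positivity)
  have hx : (0:ℝ) ≤ x := Nat.cast_nonneg _
  have hy : (0:ℝ) ≤ y := Nat.cast_nonneg _
  have h : (x+1)*(y+1) ≤ (x+y+2)^2 := by nlinarith [sq_nonneg (x - y)]
  calc (x+1)^2*(y+1)^2 = ((x+1)*(y+1)) * ((x+1)*(y+1)) := by ring
    _ ≤ ((x+1)*(y+1)) * (x+y+2)^2 := by
        apply mul_le_mul_of_nonneg_left h (by positivity)
    _ = (x+1)*((y+1)*(x+y+2)^2) := by ring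

lemma summable_t4 : Summable t4 := by
  have hprod := prodsum (summable_odd_pow one_lt_two) (summable_odd_pow one_lt_two)
    (fun n => by positivity) (fun n => by positivity)
  refine hprod.congr fun q => ?_
  unfold t4; rw [one_div_mul_one_div]


lemma tsum_swap (F : ℕ × ℕ → ℝ) : ∑' q : ℕ × ℕ, F (q.2, q.1) = ∑' q, F q := by
  have h := (Equiv.prodComm ℕ ℕ).tsum_eq F
  simpa [Equiv.prodComm, Prod.swap] using h

lemma summable_swap {F : ℕ × ℕ → ℝ} (hF : Summable F) :
    Summable (fun q : ℕ × ℕ => F (q.2, q.1)) := by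
  have h := hF.comp_injective (Equiv.prodComm ℕ ℕ).injective
  simpa [Function.comp_def, Equiv.prodComm, Prod.swap] using h

lemma cls_inj (i j : ℕ) : Injective (fun q : ℕ × ℕ => (2*q.1+i, 2*q.2+j)) := by
  intro a b h
  simp only [Prod.mk.injEq, Prod.ext_iff] at h ⊢
  omega

/-- Four-way parity decomposition of a double sum. -/
lemma parity_split (F : ℕ × ℕ → ℝ) (hF : Summable F) :
    ∑' q, F q = (∑' q : ℕ × ℕ, F (2*q.1, 2*q.2)) + (∑' q : ℕ × ℕ, F (2*q.1+1, 2*q.2))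
      + (∑' q : ℕ × ℕ, F (2*q.1, 2*q.2+1)) + (∑' q : ℕ × ℕ, F (2*q.1+1, 2*q.2+1)) := by
  classical
  have piece : ∀ i j : ℕ, i < 2 → j < 2 →
      ∑' q : ℕ × ℕ, ({q : ℕ × ℕ | q.1 % 2 = i ∧ q.2 % 2 = j}.indicator F) q
        = ∑' q : ℕ × ℕ, F (2*q.1+i, 2*q.2+j) := by
    intro i j hi hj
    have hsupp : Function.support ({q : ℕ × ℕ | q.1 % 2 = i ∧ q.2 % 2 = j}.indicator F)
        ⊆ Set.range (fun q : ℕ × ℕ => (2*q.1+i, 2*q.2+j)) := by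
      refine subset_trans Set.support_indicator_subset ?_
      rintro ⟨x, y⟩ ⟨hx, hy⟩
      refine ⟨(x/2, y/2), ?_⟩
      show (2*(x/2)+i, 2*(y/2)+j) = (x, y)
      simp only [Prod.mk.injEq]
      omega
    rw [← Function.Injective.tsum_eq (cls_inj i j) hsupp]
    refine tsum_congr fun q => ?_
    rw [Set.indicator_of_mem]
    exact ⟨by omega, by omega⟩
  have i00 : Summable ({q : ℕ × ℕ | q.1 % 2 = 0 ∧ q.2 % 2 = 0}.indicator F) := hF.indicator _
  have i10 : Summable ({q : ℕ × ℕ | q.1 % 2 = 1 ∧ q.2 % 2 = 0}.indicator F) := hF.indicator _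
  have i01 : Summable ({q : ℕ × ℕ | q.1 % 2 = 0 ∧ q.2 % 2 = 1}.indicator F) := hF.indicator _
  have i11 : Summable ({q : ℕ × ℕ | q.1 % 2 = 1 ∧ q.2 % 2 = 1}.indicator F) := hF.indicator _
  have hdec : ∀ q : ℕ × ℕ, F q =
      ({q : ℕ × ℕ | q.1 % 2 = 0 ∧ q.2 % 2 = 0}.indicator F) q
      + ({q : ℕ × ℕ | q.1 % 2 = 1 ∧ q.2 % 2 = 0}.indicator F) q
      + ({q : ℕ × ℕ | q.1 % 2 = 0 ∧ q.2 % 2 = 1}.indicator F) q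
      + ({q : ℕ × ℕ | q.1 % 2 = 1 ∧ q.2 % 2 = 1}.indicator F) q := by
    intro q
    rcases Nat.mod_two_eq_zero_or_one q.1 with h1 | h1 <;>
      rcases Nat.mod_two_eq_zero_or_one q.2 with h2 | h2 <;>
      simp [Set.indicator_apply, h1, h2]
  rw [tsum_congr hdec, Summable.tsum_add ((i00.add i10).add i01) i11, Summable.tsum_add (i00.add i10) i01,
    Summable.tsum_add i00 i10, piece 0 0 (by norm_num) (by norm_num), piece 1 0 (by norm_num) (by norm_num),
    piece 0 1 (by norm_num) (by norm_num), piece 1 1 (by norm_num) (by norm_num)]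
  simp only [Nat.add_zero]

/-- Split a double sum into (below diagonal, above diagonal, diagonal). -/
lemma diag_split (F : ℕ × ℕ → ℝ) (hF : Summable F) :
    ∑' q, F q = (∑' q : ℕ × ℕ, F (q.1+q.2+1, q.2)) + (∑' q : ℕ × ℕ, F (q.2, q.1+q.2+1))
      + ∑' n : ℕ, F (n, n) := by
  classical
  have hinj1 : Injective (fun q : ℕ × ℕ => (q.1+q.2+1, q.2)) := by
    intro a b h; simp only [Prod.mk.injEq, Prod.ext_iff] at h ⊢; omega
  have hinj2 : Injective (fun q : ℕ × ℕ => (q.2, q.1+q.2+1)) := by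
    intro a b h; simp only [Prod.mk.injEq, Prod.ext_iff] at h ⊢; omega
  have hinj3 : Injective (fun n : ℕ => ((n, n) : ℕ × ℕ)) := by
    intro a b h; simp only [Prod.mk.injEq] at h; exact h.1
  have p1 : ∑' q : ℕ × ℕ, ({q : ℕ × ℕ | q.2 < q.1}.indicator F) q
      = ∑' q : ℕ × ℕ, F (q.1+q.2+1, q.2) := by
    rw [← Function.Injective.tsum_eq hinj1]
    · refine tsum_congr fun q => ?_
      rw [Set.indicator_of_mem]
      show (q.1+q.2+1, q.2).2 < (q.1+q.2+1, q.2).1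
      simp only
      omega
    · refine subset_trans Set.support_indicator_subset ?_
      rintro ⟨x, y⟩ hxy
      simp only [Set.mem_setOf_eq] at hxy
      refine ⟨(x - y - 1, y), ?_⟩
      show (x - y - 1 + y + 1, y) = (x, y)
      rw [show x - y - 1 + y + 1 = x by omega]
  have p2 : ∑' q : ℕ × ℕ, ({q : ℕ × ℕ | q.1 < q.2}.indicator F) q
      = ∑' q : ℕ × ℕ, F (q.2, q.1+q.2+1) := by
    rw [← Function.Injective.tsum_eq hinj2]
    · refine tsum_congr fun q => ?_
      rw [Set.indicator_of_mem]
      show (q.2, q.1+q.2+1).1 < (q.2, q.1+q.2+1).2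
      simp only
      omega
    · refine subset_trans Set.support_indicator_subset ?_
      rintro ⟨x, y⟩ hxy
      simp only [Set.mem_setOf_eq] at hxy
      refine ⟨(y - x - 1, x), ?_⟩
      show (x, y - x - 1 + x + 1) = (x, y)
      rw [show y - x - 1 + x + 1 = y by omega]
  have p3 : ∑' q : ℕ × ℕ, ({q : ℕ × ℕ | q.1 = q.2}.indicator F) q = ∑' n : ℕ, F (n, n) := by
    rw [← Function.Injective.tsum_eq hinj3]
    · refine tsum_congr fun n => ?_
      rw [Set.indicator_of_mem]
      show (n, n).1 = (n, n).2
      rfl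
    · refine subset_trans Set.support_indicator_subset ?_
      rintro ⟨x, y⟩ hxy
      simp only [Set.mem_setOf_eq] at hxy
      refine ⟨x, ?_⟩
      show (x, x) = (x, y)
      simp [hxy]
  have i1 : Summable ({q : ℕ × ℕ | q.2 < q.1}.indicator F) := hF.indicator _
  have i2 : Summable ({q : ℕ × ℕ | q.1 < q.2}.indicator F) := hF.indicator _
  have i3 : Summable ({q : ℕ × ℕ | q.1 = q.2}.indicator F) := hF.indicator _
  have hdec : ∀ q : ℕ × ℕ, F q =
      ({q : ℕ × ℕ | q.2 < q.1}.indicator F) q + ({q : ℕ × ℕ | q.1 < q.2}.indicator F) q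
      + ({q : ℕ × ℕ | q.1 = q.2}.indicator F) q := by
    intro q
    simp only [Set.indicator_apply, Set.mem_setOf_eq]
    rcases lt_trichotomy q.1 q.2 with h | h | h
    · rw [if_neg (by omega), if_pos h, if_neg (by omega)]; ring
    · rw [if_neg (by omega), if_neg (by omega), if_pos h]; ring
    · rw [if_pos h, if_neg (by omega), if_neg (by omega)]; ring
  rw [tsum_congr hdec, Summable.tsum_add (i1.add i2) i3, Summable.tsum_add i1 i2, p1, p2, p3]

/-- Even/odd decomposition of a single sum. -/
lemma parity_split₁ (f : ℕ → ℝ) (hf : Summable f) :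
    ∑' n, f n = (∑' n : ℕ, f (2*n)) + ∑' n : ℕ, f (2*n+1) := by
  classical
  have hinj0 : Injective (fun n : ℕ => 2*n) := by
    intro a b h
    have h' : 2*a = 2*b := h
    omega
  have hinj1 : Injective (fun n : ℕ => 2*n+1) := by
    intro a b h
    have h' : 2*a+1 = 2*b+1 := h
    omega
  have p0 : ∑' n : ℕ, ({n : ℕ | n % 2 = 0}.indicator f) n = ∑' n : ℕ, f (2*n) := by
    rw [← Function.Injective.tsum_eq hinj0]
    · refine tsum_congr fun n => ?_
      rw [Set.indicator_of_mem]
      show (2*n) % 2 = 0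
      omega
    · refine subset_trans Set.support_indicator_subset ?_
      intro x hx
      simp only [Set.mem_setOf_eq] at hx
      refine ⟨x/2, ?_⟩
      show 2*(x/2) = x
      omega
  have p1 : ∑' n : ℕ, ({n : ℕ | n % 2 = 1}.indicator f) n = ∑' n : ℕ, f (2*n+1) := by
    rw [← Function.Injective.tsum_eq hinj1]
    · refine tsum_congr fun n => ?_
      rw [Set.indicator_of_mem]
      show (2*n+1) % 2 = 1
      omega
    · refine subset_trans Set.support_indicator_subset ?_
      intro x hx
      simp only [Set.mem_setOf_eq] at hx
      refine ⟨x/2, ?_⟩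
      show 2*(x/2)+1 = x
      omega
  have hdec : ∀ n : ℕ, f n = ({n : ℕ | n % 2 = 0}.indicator f) n
      + ({n : ℕ | n % 2 = 1}.indicator f) n := by
    intro n
    rcases Nat.mod_two_eq_zero_or_one n with h | h <;> simp [Set.indicator_apply, h]
  rw [tsum_congr hdec, Summable.tsum_add (hf.indicator _) (hf.indicator _), p0, p1]




def oh (b : ℕ) : ℝ := 1 / (2*(b:ℝ)+1)
def OS (d : ℕ) : ℝ := ∑ c ∈ Finset.range d, oh c

lemma oh_nonneg (b : ℕ) : 0 ≤ oh b := by unfold oh; positivity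

lemma oh_tendsto : Tendsto oh atTop (nhds 0) := by
  apply squeeze_zero oh_nonneg (g := fun n : ℕ => 1/((n:ℝ)+1))
  · intro n
    unfold oh
    apply one_div_le_one_div_of_le (by positivity)
    have : (0:ℝ) ≤ (n:ℝ) := Nat.cast_nonneg _
    linarith
  · exact tendsto_one_div_add_atTop_nhds_zero_nat

lemma oh_anti (a b : ℕ) (h : a ≤ b) : oh b ≤ oh a := by
  unfold oh
  apply one_div_le_one_div_of_le (by positivity)
  have : (a:ℝ) ≤ (b:ℝ) := Nat.cast_le.mpr h
  linarith

lemma telescope_unit (d : ℕ) : HasSum (fun b : ℕ => oh (b+d) - oh (b+d+1)) (oh d) := by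
  rw [hasSum_iff_tendsto_nat_of_nonneg
    (fun i => sub_nonneg.mpr (oh_anti (i+d) (i+d+1) (by omega)))]
  have hps : ∀ n, ∑ i ∈ Finset.range n, (oh (i+d) - oh (i+d+1)) = oh d - oh (n+d) := by
    intro n
    induction n with
    | zero => simp
    | succ n ih =>
      rw [Finset.sum_range_succ, ih, show n+1+d = n+d+1 by omega]
      ring
  have h2 : Tendsto (fun n : ℕ => oh (n+d)) atTop (nhds 0) :=
    oh_tendsto.comp (tendsto_add_atTop_nat d)
  have h3 : Tendsto (fun n : ℕ => oh d - oh (n+d)) atTop (nhds (oh d)) := by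
    simpa using (tendsto_const_nhds (x := oh d) (f := atTop)).sub h2
  exact h3.congr fun n => (hps n).symm

lemma telescope (d : ℕ) : HasSum (fun b : ℕ => oh b - oh (b+d)) (OS d) := by
  induction d with
  | zero =>
    have h : (fun b : ℕ => oh b - oh (b+0)) = fun _ => (0:ℝ) := funext fun b => by simp
    rw [h]
    simpa [OS] using hasSum_zero
  | succ d ih =>
    have h := ih.add (telescope_unit d)
    have heq : (fun b : ℕ => (oh b - oh (b+d)) + (oh (b+d) - oh (b+d+1)))
        = fun b : ℕ => oh b - oh (b+(d+1)) := funext fun b => by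
      rw [show b+(d+1) = b+d+1 by omega]; ring
    rw [heq] at h
    have hval : OS d + oh d = OS (d+1) := (Finset.sum_range_succ oh d).symm
    rwa [hval] at h

lemma tsum_telescope (d : ℕ) : ∑' b : ℕ, (oh b - oh (b+d)) = OS d := (telescope d).tsum_eq

/-- Bridge: `dsum` as a sum over `(a, b)` with `m = a + b + 2`, `n = b + 1`. -/
lemma dsum_eq (f : ℕ → ℕ → ℝ) :
    dsum f = ∑' q : ℕ × ℕ, f (q.1+q.2+2) (q.2+1) := by
  unfold dsum
  have hinj : Injective (fun q : ℕ × ℕ => (q.1+q.2+2, q.2+1)) := by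
    intro a b h
    have h' : (a.1+a.2+2, a.2+1) = (b.1+b.2+2, b.2+1) := h
    simp only [Prod.mk.injEq, Prod.ext_iff] at h' ⊢
    omega
  have hsupp : Function.support (fun p : ℕ × ℕ => if p.1 > p.2 ∧ p.2 > 0 then f p.1 p.2 else 0)
      ⊆ Set.range (fun q : ℕ × ℕ => (q.1+q.2+2, q.2+1)) := by
    intro p hp
    by_cases h : p.1 > p.2 ∧ p.2 > 0
    · refine ⟨(p.1 - p.2 - 1, p.2 - 1), ?_⟩
      show (p.1 - p.2 - 1 + (p.2 - 1) + 2, p.2 - 1 + 1) = p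
      have : p.1 - p.2 - 1 + (p.2 - 1) + 2 = p.1 := by omega
      have h2 : p.2 - 1 + 1 = p.2 := by omega
      rw [this, h2]
    · simp only [Function.mem_support] at hp
      rw [if_neg h] at hp
      exact absurd rfl hp
  rw [← Function.Injective.tsum_eq hinj hsupp]
  refine tsum_congr fun q => ?_
  rw [if_pos]
  exact ⟨by omega, by omega⟩

lemma neg_one_pow_even (a : ℕ) : (-1:ℝ)^(2*a) = 1 := by
  rw [pow_mul]; norm_num

lemma neg_one_pow_odd (a : ℕ) : (-1:ℝ)^(2*a+1) = -1 := by
  rw [pow_add, neg_one_pow_even]; norm_num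

lemma summable_sign (ε : ℕ × ℕ → ℕ) {f : ℕ × ℕ → ℝ} (hf : Summable f) (h0 : ∀ q, 0 ≤ f q) :
    Summable (fun q => (-1:ℝ)^(ε q) * f q) := by
  have h2 : Summable (fun q : ℕ × ℕ => |(-1:ℝ)^(ε q) * f q|) := by
    refine hf.congr fun q => ?_
    rw [abs_mul, abs_pow, abs_neg, abs_one, one_pow, one_mul, abs_of_nonneg (h0 q)]
  exact summable_abs_iff.mp h2


/-! ### Part (i) -/

lemma inj00 : Injective (fun q : ℕ × ℕ => (2*q.1, 2*q.2)) := by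
  intro a b h
  have h' : (2*a.1, 2*a.2) = (2*b.1, 2*b.2) := h
  simp only [Prod.mk.injEq, Prod.ext_iff] at h' ⊢
  omega

lemma inj10 : Injective (fun q : ℕ × ℕ => (2*q.1+1, 2*q.2)) := by
  intro a b h
  have h' : (2*a.1+1, 2*a.2) = (2*b.1+1, 2*b.2) := h
  simp only [Prod.mk.injEq, Prod.ext_iff] at h' ⊢
  omega

lemma inj01 : Injective (fun q : ℕ × ℕ => (2*q.1, 2*q.2+1)) := by
  intro a b h
  have h' : (2*a.1, 2*a.2+1) = (2*b.1, 2*b.2+1) := h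
  simp only [Prod.mk.injEq, Prod.ext_iff] at h' ⊢
  omega

lemma inj11 : Injective (fun q : ℕ × ℕ => (2*q.1+1, 2*q.2+1)) := by
  intro a b h
  have h' : (2*a.1+1, 2*a.2+1) = (2*b.1+1, 2*b.2+1) := h
  simp only [Prod.mk.injEq, Prod.ext_iff] at h' ⊢
  omega

lemma summable_comp {F : ℕ × ℕ → ℝ} (hF : Summable F) {g : ℕ × ℕ → ℕ × ℕ}
    (hg : Injective g) : Summable (fun q => F (g q)) := hF.comp_injective hg

/-- `1/(nkm) = 1/(m²n) + 1/(m²k)`. -/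
lemma g3_eq (a b : ℕ) : g3 (a, b) = b3 (a, b) + b3 (b, a) := by
  unfold g3 b3
  simp only
  have h1 : ((a:ℝ)) + 1 > 0 := by positivity
  have h2 : ((b:ℝ)) + 1 > 0 := by positivity
  have h3 : ((a:ℝ)) + b + 2 > 0 := by positivity
  have h4 : ((b:ℝ)) + a + 2 > 0 := by positivity
  field_simp
  ring

/-- `1/((2a+1)(2b+1)(2a+2b+2)) = r3 + r3∘swap`. -/
lemma g3_oo_eq (a b : ℕ) : g3 (2*a, 2*b) = r3 (a, b) + r3 (b, a) := by
  unfold g3 r3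
  simp only
  push_cast
  have h1 : 2*(a:ℝ) + 1 > 0 := by positivity
  have h2 : 2*(b:ℝ) + 1 > 0 := by positivity
  have h3 : 2*(a:ℝ) + 2*(b:ℝ) + 2 > 0 := by positivity
  have h5 : ((a:ℝ)) + b + 1 > 0 := by positivity
  have h6 : ((b:ℝ)) + a + 1 > 0 := by positivity
  field_simp
  ring

lemma g3_10_eq (a b : ℕ) :
    g3 (2*a+1, 2*b) = 1/(4*((a:ℝ)+1)^2) * (oh b - oh (b+(a+1))) := by
  unfold g3 oh
  simp only
  push_cast
  have h1 : 2*(a:ℝ) + 2 > 0 := by positivity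
  have h2 : 2*(b:ℝ) + 1 > 0 := by positivity
  have h3 : 2*(a:ℝ)+1 + 2*(b:ℝ) + 2 > 0 := by positivity
  have h4 : ((a:ℝ)) + 1 > 0 := by positivity
  have h5 : 2*((b:ℝ) + ((a:ℝ)+1)) + 1 > 0 := by positivity
  field_simp
  ring

lemma summable_g3 : Summable g3 := by
  refine (summable_b3.add (summable_swap summable_b3)).congr fun q => ?_
  exact (g3_eq q.1 q.2).symm

lemma summable_g3_00 : Summable (fun q : ℕ × ℕ => g3 (2*q.1, 2*q.2)) :=
  summable_comp summable_g3 inj00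
lemma summable_g3_10 : Summable (fun q : ℕ × ℕ => g3 (2*q.1+1, 2*q.2)) :=
  summable_comp summable_g3 inj10
lemma summable_b3_00 : Summable (fun q : ℕ × ℕ => b3 (2*q.1, 2*q.2)) :=
  summable_comp summable_b3 inj00
lemma summable_b3_10 : Summable (fun q : ℕ × ℕ => b3 (2*q.1+1, 2*q.2)) :=
  summable_comp summable_b3 inj10
lemma summable_b3_01 : Summable (fun q : ℕ × ℕ => b3 (2*q.1, 2*q.2+1)) :=
  summable_comp summable_b3 inj01

lemma summable_r3 : Summable r3 := by
  refine Summable.of_nonneg_of_le r3_nonneg (fun q => ?_) summable_g3_00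
  have h := g3_oo_eq q.1 q.2
  have h2 := r3_nonneg (q.2, q.1)
  have h3 : r3 (q.1, q.2) = r3 q := by rfl
  nlinarith [h2]

/-- Symmetrization on the odd-odd class. -/
lemma L1 : ∑' q : ℕ × ℕ, g3 (2*q.1, 2*q.2) = 2 * ∑' q : ℕ × ℕ, b3 (2*q.1, 2*q.2) := by
  have hpt : ∀ q : ℕ × ℕ, g3 (2*q.1, 2*q.2) = b3 (2*q.1, 2*q.2) + b3 (2*q.2, 2*q.1) :=
    fun q => g3_eq (2*q.1) (2*q.2)
  rw [tsum_congr hpt, Summable.tsum_add summable_b3_00 (summable_swap summable_b3_00)]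
  have hs : ∑' q : ℕ × ℕ, b3 (2*q.2, 2*q.1) = ∑' q : ℕ × ℕ, b3 (2*q.1, 2*q.2) :=
    tsum_swap (fun q => b3 (2*q.1, 2*q.2))
  rw [hs]
  ring

lemma L2 : ∑' q : ℕ × ℕ, g3 (2*q.1, 2*q.2) = 2 * ∑' q : ℕ × ℕ, r3 q := by
  have hpt : ∀ q : ℕ × ℕ, g3 (2*q.1, 2*q.2) = r3 q + r3 (q.2, q.1) := by
    intro q
    have := g3_oo_eq q.1 q.2
    simpa using this
  rw [tsum_congr hpt, Summable.tsum_add summable_r3 (summable_swap summable_r3), tsum_swap r3]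
  ring

/-- The `Q` side: `∑ r3 = ∑_s 1/(4(s+1)²)·O(s+1)`. -/
lemma L3 : ∑' q : ℕ × ℕ, r3 q = ∑' s : ℕ, 1/(4*((s:ℝ)+1)^2) * OS (s+1) := by
  classical
  set H : ℕ × ℕ → ℝ := fun p => if p.2 ≤ p.1 then 1/(4*((p.1:ℝ)+1)^2) * oh p.2 else 0 with hH
  have hinjH : Injective (fun q : ℕ × ℕ => (q.1+q.2, q.1)) := by
    intro a b h
    have h' : (a.1+a.2, a.1) = (b.1+b.2, b.1) := h
    simp only [Prod.mk.injEq, Prod.ext_iff] at h' ⊢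
    omega
  have hcomp : ∀ q : ℕ × ℕ, H (q.1+q.2, q.1) = r3 q := by
    intro q
    have hle : (q.1+q.2, q.1).2 ≤ (q.1+q.2, q.1).1 := by simp only; omega
    rw [hH]
    simp only [if_pos hle]
    unfold r3 oh
    push_cast
    have h1 : ((q.1:ℝ)) + q.2 + 1 > 0 := by positivity
    have h2 : 2*(q.1:ℝ) + 1 > 0 := by positivity
    field_simp
    try ring
  have hsuppH : Function.support H ⊆ Set.range (fun q : ℕ × ℕ => (q.1+q.2, q.1)) := by
    intro p hp
    have hle : p.2 ≤ p.1 := by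
      by_contra hc
      rw [hH] at hp
      simp only [Function.mem_support, if_neg hc] at hp
      exact hp rfl
    refine ⟨(p.2, p.1 - p.2), ?_⟩
    show (p.2 + (p.1 - p.2), p.2) = p
    have : p.2 + (p.1 - p.2) = p.1 := by omega
    rw [this]
  have hHsum : Summable H := by
    refine (Function.Injective.summable_iff hinjH ?_).mp ?_
    · intro x hx
      by_contra hne
      exact hx (hsuppH hne)
    · exact summable_r3.congr fun q => (hcomp q).symm
  have step1 : ∑' q : ℕ × ℕ, r3 q = ∑' p : ℕ × ℕ, H p := by
    rw [← Function.Injective.tsum_eq hinjH hsuppH]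
    exact tsum_congr fun q => (hcomp q).symm
  rw [step1, Summable.tsum_prod hHsum]
  refine tsum_congr fun s => ?_
  have hfin : ∀ a ∉ Finset.range (s+1), H (s, a) = 0 := by
    intro a ha
    rw [hH]
    simp only
    rw [if_neg]
    simp only [Finset.mem_range] at ha
    show ¬ (a ≤ s)
    omega
  rw [tsum_eq_sum hfin]
  have hval : ∀ a ∈ Finset.range (s+1), H (s, a) = 1/(4*((s:ℝ)+1)^2) * oh a := by
    intro a ha
    simp only [Finset.mem_range] at ha
    rw [hH]
    simp only
    rw [if_pos]
    show a ≤ s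
    omega
  rw [Finset.sum_congr rfl hval, ← Finset.mul_sum]
  rfl

/-- The `P` side. -/
lemma L4 : ∑' q : ℕ × ℕ, g3 (2*q.1+1, 2*q.2) = ∑' s : ℕ, 1/(4*((s:ℝ)+1)^2) * OS (s+1) := by
  rw [Summable.tsum_prod summable_g3_10]
  refine tsum_congr fun a => ?_
  have hpt : ∀ b : ℕ, g3 (2*a+1, 2*b) = 1/(4*((a:ℝ)+1)^2) * (oh b - oh (b+(a+1))) :=
    fun b => g3_10_eq a b
  calc ∑' b : ℕ, g3 (2*a+1, 2*b)
      = ∑' b : ℕ, 1/(4*((a:ℝ)+1)^2) * (oh b - oh (b+(a+1))) := tsum_congr hpt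
    _ = 1/(4*((a:ℝ)+1)^2) * ∑' b : ℕ, (oh b - oh (b+(a+1))) := tsum_mul_left
    _ = 1/(4*((a:ℝ)+1)^2) * OS (a+1) := by rw [tsum_telescope]

/-- Splitting the symmetrized mixed-parity class. -/
lemma L6 : ∑' q : ℕ × ℕ, g3 (2*q.1+1, 2*q.2)
    = (∑' q : ℕ × ℕ, b3 (2*q.1+1, 2*q.2)) + ∑' q : ℕ × ℕ, b3 (2*q.1, 2*q.2+1) := by
  have hpt : ∀ q : ℕ × ℕ, g3 (2*q.1+1, 2*q.2) = b3 (2*q.1+1, 2*q.2) + b3 (2*q.2, 2*q.1+1) :=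
    fun q => g3_eq (2*q.1+1) (2*q.2)
  rw [tsum_congr hpt, Summable.tsum_add summable_b3_10 (summable_swap summable_b3_01)]
  have hs : ∑' q : ℕ × ℕ, b3 (2*q.2, 2*q.1+1) = ∑' q : ℕ × ℕ, b3 (2*q.1, 2*q.2+1) :=
    tsum_swap (fun q => b3 (2*q.1, 2*q.2+1))
  rw [hs]

/-- Key identity for part (i). -/
lemma keyI : (∑' q : ℕ × ℕ, b3 (2*q.1+1, 2*q.2)) + (∑' q : ℕ × ℕ, b3 (2*q.1, 2*q.2+1))
    = ∑' q : ℕ × ℕ, b3 (2*q.1, 2*q.2) := by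
  have e1 := L1; have e2 := L2; have e3 := L3; have e4 := L4; have e5 := L6
  linarith

/-! ### Part (ii) -/

lemma x4_eq (a b : ℕ) : x4 (a, b) = c4 (a, b) + c4 (b, a) := by
  unfold x4 c4
  simp only
  have h1 : ((a:ℝ)) + 1 > 0 := by positivity
  have h2 : ((b:ℝ)) + 1 > 0 := by positivity
  have h3 : ((a:ℝ)) + b + 2 > 0 := by positivity
  have h4 : ((b:ℝ)) + a + 2 > 0 := by positivity
  field_simp
  ring

lemma k4_eq (a b : ℕ) : k4 (a, b) = e4 (a, b) + e4 (b, a) + 2 * x4 (a, b) := by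
  unfold k4 e4 x4
  simp only
  have h1 : ((a:ℝ)) + 1 > 0 := by positivity
  have h2 : ((b:ℝ)) + 1 > 0 := by positivity
  have h3 : ((a:ℝ)) + b + 2 > 0 := by positivity
  have h4 : ((b:ℝ)) + a + 2 > 0 := by positivity
  field_simp
  ring

lemma x4_ee (a b : ℕ) : x4 (2*a+1, 2*b+1) = (1/16) * x4 (a, b) := by
  unfold x4
  simp only
  push_cast
  have h1 : ((a:ℝ)) + 1 > 0 := by positivity
  have h2 : ((b:ℝ)) + 1 > 0 := by positivity
  have h3 : ((a:ℝ)) + b + 2 > 0 := by positivity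
  field_simp
  ring

lemma t4_eq_k4 (a b : ℕ) : t4 (a, b) = k4 (2*a, 2*b) := by
  unfold t4 k4
  simp only
  push_cast
  ring

lemma t4_diag1 (a b : ℕ) : t4 (a+b+1, b) = e4 (2*a+1, 2*b) := by
  unfold t4 e4
  simp only
  push_cast
  ring

lemma t4_diag2 (a b : ℕ) : t4 (b, a+b+1) = e4 (2*a+1, 2*b) := by
  unfold t4 e4
  simp only
  push_cast
  ring

lemma t4_nn (n : ℕ) : t4 (n, n) = 1/(2*(n:ℝ)+1)^4 := by
  unfold t4
  simp only
  ring

lemma k4_diag1 (a b : ℕ) : k4 (a+b+1, b) = e4 (a, b) := by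
  unfold k4 e4
  simp only
  push_cast
  ring

lemma k4_diag2 (a b : ℕ) : k4 (b, a+b+1) = e4 (a, b) := by
  unfold k4 e4
  simp only
  push_cast
  ring

lemma k4_nn (n : ℕ) : k4 (n, n) = 1/((n:ℝ)+1)^4 := by
  unfold k4
  simp only
  ring

lemma summable_c4_10 : Summable (fun q : ℕ × ℕ => c4 (2*q.1+1, 2*q.2)) :=
  summable_comp summable_c4 inj10
lemma summable_c4_01 : Summable (fun q : ℕ × ℕ => c4 (2*q.1, 2*q.2+1)) :=
  summable_comp summable_c4 inj01
lemma summable_e4_00 : Summable (fun q : ℕ × ℕ => e4 (2*q.1, 2*q.2)) :=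
  summable_comp summable_e4 inj00
lemma summable_e4_10 : Summable (fun q : ℕ × ℕ => e4 (2*q.1+1, 2*q.2)) :=
  summable_comp summable_e4 inj10
lemma summable_x4_00 : Summable (fun q : ℕ × ℕ => x4 (2*q.1, 2*q.2)) :=
  summable_comp summable_x4 inj00

lemma tsum_t4_prod : ∑' q : ℕ × ℕ, t4 q
    = (∑' n : ℕ, 1/(2*(n:ℝ)+1)^2) * (∑' n : ℕ, 1/(2*(n:ℝ)+1)^2) := by
  rw [Summable.tsum_prod summable_t4]
  calc ∑' (a : ℕ) (b : ℕ), t4 (a, b)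
      = ∑' (a : ℕ) (b : ℕ), (1/(2*(a:ℝ)+1)^2) * (1/(2*(b:ℝ)+1)^2) := by
        refine tsum_congr fun a => tsum_congr fun b => ?_
        unfold t4
        simp only
        rw [one_div_mul_one_div]
    _ = ∑' (a : ℕ), (1/(2*(a:ℝ)+1)^2) * ∑' (b : ℕ), (1/(2*(b:ℝ)+1)^2) :=
        tsum_congr fun a => tsum_mul_left
    _ = _ := tsum_mul_right

lemma tsum_k4_prod : ∑' q : ℕ × ℕ, k4 q
    = (∑' n : ℕ, 1/((n:ℝ)+1)^2) * (∑' n : ℕ, 1/((n:ℝ)+1)^2) := by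
  rw [Summable.tsum_prod summable_k4]
  calc ∑' (a : ℕ) (b : ℕ), k4 (a, b)
      = ∑' (a : ℕ) (b : ℕ), (1/((a:ℝ)+1)^2) * (1/((b:ℝ)+1)^2) := by
        refine tsum_congr fun a => tsum_congr fun b => ?_
        unfold k4
        simp only
        rw [one_div_mul_one_div]
    _ = ∑' (a : ℕ), (1/((a:ℝ)+1)^2) * ∑' (b : ℕ), (1/((b:ℝ)+1)^2) :=
        tsum_congr fun a => tsum_mul_left
    _ = _ := tsum_mul_right

lemma M1 : ∑' q : ℕ × ℕ, x4 (2*q.1+1, 2*q.2)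
    = (∑' q : ℕ × ℕ, c4 (2*q.1+1, 2*q.2)) + ∑' q : ℕ × ℕ, c4 (2*q.1, 2*q.2+1) := by
  have hpt : ∀ q : ℕ × ℕ, x4 (2*q.1+1, 2*q.2) = c4 (2*q.1+1, 2*q.2) + c4 (2*q.2, 2*q.1+1) :=
    fun q => x4_eq (2*q.1+1) (2*q.2)
  rw [tsum_congr hpt, Summable.tsum_add summable_c4_10 (summable_swap summable_c4_01),
    tsum_swap (fun q => c4 (2*q.1, 2*q.2+1))]

lemma M2 : ∑' q : ℕ × ℕ, x4 (2*q.1, 2*q.2+1)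
    = (∑' q : ℕ × ℕ, c4 (2*q.1+1, 2*q.2)) + ∑' q : ℕ × ℕ, c4 (2*q.1, 2*q.2+1) := by
  have hpt : ∀ q : ℕ × ℕ, x4 (2*q.1, 2*q.2+1) = c4 (2*q.1, 2*q.2+1) + c4 (2*q.2+1, 2*q.1) :=
    fun q => x4_eq (2*q.1) (2*q.2+1)
  rw [tsum_congr hpt, Summable.tsum_add summable_c4_01 (summable_swap summable_c4_10),
    tsum_swap (fun q => c4 (2*q.1+1, 2*q.2))]
  ring

lemma M3 : ∑' q : ℕ × ℕ, x4 q = (∑' q : ℕ × ℕ, x4 (2*q.1, 2*q.2))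
    + 2 * ((∑' q : ℕ × ℕ, c4 (2*q.1+1, 2*q.2)) + ∑' q : ℕ × ℕ, c4 (2*q.1, 2*q.2+1))
    + (1/16) * ∑' q : ℕ × ℕ, x4 q := by
  have hsplit := parity_split x4 summable_x4
  have h11 : ∑' q : ℕ × ℕ, x4 (2*q.1+1, 2*q.2+1) = (1/16) * ∑' q : ℕ × ℕ, x4 q := by
    calc ∑' q : ℕ × ℕ, x4 (2*q.1+1, 2*q.2+1)
        = ∑' q : ℕ × ℕ, (1/16) * x4 q := tsum_congr fun q => x4_ee q.1 q.2
      _ = (1/16) * ∑' q : ℕ × ℕ, x4 q := tsum_mul_left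
  rw [M1, M2, h11] at hsplit
  linarith

lemma M4 : (∑' n : ℕ, 1/(2*(n:ℝ)+1)^2) * (∑' n : ℕ, 1/(2*(n:ℝ)+1)^2)
    = 2 * (∑' q : ℕ × ℕ, e4 (2*q.1, 2*q.2)) + 2 * ∑' q : ℕ × ℕ, x4 (2*q.1, 2*q.2) := by
  rw [← tsum_t4_prod]
  have hpt : ∀ q : ℕ × ℕ, t4 q = e4 (2*q.1, 2*q.2) + e4 (2*q.2, 2*q.1) + 2 * x4 (2*q.1, 2*q.2) := by
    intro q
    rw [t4_eq_k4 q.1 q.2]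
    exact k4_eq (2*q.1) (2*q.2)
  rw [tsum_congr hpt,
    Summable.tsum_add (summable_e4_00.add (summable_swap summable_e4_00))
      ((summable_x4_00).mul_left 2),
    Summable.tsum_add summable_e4_00 (summable_swap summable_e4_00),
    tsum_swap (fun q => e4 (2*q.1, 2*q.2)), tsum_mul_left]
  ring

lemma M5 : (∑' n : ℕ, 1/(2*(n:ℝ)+1)^2) * (∑' n : ℕ, 1/(2*(n:ℝ)+1)^2)
    = 2 * (∑' q : ℕ × ℕ, e4 (2*q.1+1, 2*q.2)) + ∑' n : ℕ, 1/(2*(n:ℝ)+1)^4 := by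
  rw [← tsum_t4_prod, diag_split t4 summable_t4]
  rw [tsum_congr (fun q : ℕ × ℕ => t4_diag1 q.1 q.2),
    tsum_congr (fun q : ℕ × ℕ => t4_diag2 q.1 q.2),
    tsum_congr (fun n : ℕ => t4_nn n)]
  ring

lemma M67 : ∑' n : ℕ, 1/((n:ℝ)+1)^4 = 2 * ∑' q : ℕ × ℕ, x4 q := by
  have h6 : ∑' q : ℕ × ℕ, k4 q
      = 2 * (∑' q : ℕ × ℕ, e4 q) + 2 * ∑' q : ℕ × ℕ, x4 q := by
    have hpt : ∀ q : ℕ × ℕ, k4 q = e4 q + e4 (q.2, q.1) + 2 * x4 q := by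
      intro q
      exact k4_eq q.1 q.2
    rw [tsum_congr hpt,
      Summable.tsum_add (summable_e4.add (summable_swap summable_e4)) (summable_x4.mul_left 2),
      Summable.tsum_add summable_e4 (summable_swap summable_e4),
      tsum_swap e4, tsum_mul_left]
    ring
  have h7 : ∑' q : ℕ × ℕ, k4 q
      = 2 * (∑' q : ℕ × ℕ, e4 q) + ∑' n : ℕ, 1/((n:ℝ)+1)^4 := by
    rw [diag_split k4 summable_k4]
    rw [tsum_congr (fun q : ℕ × ℕ => k4_diag1 q.1 q.2),
      tsum_congr (fun q : ℕ × ℕ => k4_diag2 q.1 q.2),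
      tsum_congr (fun n : ℕ => k4_nn n)]
    ring
  linarith

lemma M8 : ∑' n : ℕ, 1/((n:ℝ)+1)^4
    = (∑' n : ℕ, 1/(2*(n:ℝ)+1)^4) + (1/16) * ∑' n : ℕ, 1/((n:ℝ)+1)^4 := by
  have hsplit := parity_split₁ (fun n => 1/((n:ℝ)+1)^4) (summable_pow_shift (by norm_num))
  have h0 : ∑' n : ℕ, 1/(((2*n : ℕ):ℝ)+1)^4 = ∑' n : ℕ, 1/(2*(n:ℝ)+1)^4 := by
    refine tsum_congr fun n => ?_
    push_cast
    ring
  have h1 : ∑' n : ℕ, 1/(((2*n+1 : ℕ):ℝ)+1)^4 = (1/16) * ∑' n : ℕ, 1/((n:ℝ)+1)^4 := by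
    have hpt : ∀ n : ℕ, 1/(((2*n+1 : ℕ):ℝ)+1)^4 = (1/16) * (1/((n:ℝ)+1)^4) := by
      intro n
      push_cast
      have h : ((n:ℝ)) + 1 > 0 := by positivity
      field_simp
      ring
    rw [tsum_congr hpt, tsum_mul_left]
  calc ∑' n : ℕ, 1/((n:ℝ)+1)^4
      = (∑' n : ℕ, 1/(((2*n : ℕ):ℝ)+1)^4) + ∑' n : ℕ, 1/(((2*n+1 : ℕ):ℝ)+1)^4 := hsplit
    _ = _ := by rw [h0, h1]

/-- Key identity for part (ii). -/
lemma keyII : 4 * ((∑' q : ℕ × ℕ, c4 (2*q.1+1, 2*q.2)) + ∑' q : ℕ × ℕ, c4 (2*q.1, 2*q.2+1))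
    + 2 * (∑' q : ℕ × ℕ, e4 (2*q.1+1, 2*q.2)) - 2 * (∑' q : ℕ × ℕ, e4 (2*q.1, 2*q.2)) = 0 := by
  have h3 := M3; have h4 := M4; have h5 := M5; have h67 := M67; have h8 := M8
  linarith

/-! ### Bridges from `dsum` to the base families -/

lemma sign_m (q : ℕ × ℕ) : (-1:ℝ)^(q.1+q.2+2) = (-1)^(q.1+q.2) := by
  rw [pow_add]; norm_num

lemma sign_mn (q : ℕ × ℕ) : (-1:ℝ)^((q.1+q.2+2)+(q.2+1)) = (-1)^(q.1+1) := by
  rw [show (q.1+q.2+2)+(q.2+1) = (q.1+1)+2*(q.2+1) by ring, pow_add, neg_one_pow_even, mul_one]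

lemma D0_eq : dsum (fun m n => 1 / ((m : ℝ) ^ 2 * n)) = ∑' q : ℕ × ℕ, b3 q := by
  rw [dsum_eq]
  refine tsum_congr fun q => ?_
  unfold b3
  push_cast
  ring

lemma D1_eq : dsum (fun m n => (-1 : ℝ) ^ m / ((m : ℝ) ^ 2 * n))
    = ∑' q : ℕ × ℕ, (-1:ℝ)^(q.1+q.2) * b3 q := by
  rw [dsum_eq]
  refine tsum_congr fun q => ?_
  rw [sign_m q]
  unfold b3
  push_cast
  ring

lemma D2_eq : dsum (fun m n => (-1 : ℝ) ^ n / ((m : ℝ) ^ 2 * n))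
    = ∑' q : ℕ × ℕ, (-1:ℝ)^(q.2+1) * b3 q := by
  rw [dsum_eq]
  refine tsum_congr fun q => ?_
  unfold b3
  push_cast
  ring

lemma D3_eq : dsum (fun m n => (-1 : ℝ) ^ (m + n) / ((m : ℝ) ^ 2 * n))
    = ∑' q : ℕ × ℕ, (-1:ℝ)^(q.1+1) * b3 q := by
  rw [dsum_eq]
  refine tsum_congr fun q => ?_
  rw [sign_mn q]
  unfold b3
  push_cast
  ring

lemma C0_eq : dsum (fun m n => 1 / ((m : ℝ) ^ 3 * n)) = ∑' q : ℕ × ℕ, c4 q := by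
  rw [dsum_eq]
  refine tsum_congr fun q => ?_
  unfold c4
  push_cast
  ring

lemma C1_eq : dsum (fun m n => (-1 : ℝ) ^ m / ((m : ℝ) ^ 3 * n))
    = ∑' q : ℕ × ℕ, (-1:ℝ)^(q.1+q.2) * c4 q := by
  rw [dsum_eq]
  refine tsum_congr fun q => ?_
  rw [sign_m q]
  unfold c4
  push_cast
  ring

lemma E2_eq : dsum (fun m n => (-1 : ℝ) ^ m / ((m : ℝ) ^ 2 * (n : ℝ) ^ 2))
    = ∑' q : ℕ × ℕ, (-1:ℝ)^(q.1+q.2) * e4 q := by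
  rw [dsum_eq]
  refine tsum_congr fun q => ?_
  rw [sign_m q]
  unfold e4
  push_cast
  ring

lemma E3_eq : dsum (fun m n => (-1 : ℝ) ^ (m + n) / ((m : ℝ) ^ 2 * (n : ℝ) ^ 2))
    = ∑' q : ℕ × ℕ, (-1:ℝ)^(q.1+1) * e4 q := by
  rw [dsum_eq]
  refine tsum_congr fun q => ?_
  rw [sign_mn q]
  unfold e4
  push_cast
  ring

/-! ### The two combination identities -/

lemma comboI : (∑' q : ℕ × ℕ, b3 q) + (∑' q : ℕ × ℕ, (-1:ℝ)^(q.2+1) * b3 q)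
    + (∑' q : ℕ × ℕ, (-1:ℝ)^(q.1+1) * b3 q)
    - 3 * (∑' q : ℕ × ℕ, (-1:ℝ)^(q.1+q.2) * b3 q) = 0 := by
  have s1 : Summable (fun q : ℕ × ℕ => (-1:ℝ)^(q.1+q.2) * b3 q) :=
    summable_sign _ summable_b3 b3_nonneg
  have s2 : Summable (fun q : ℕ × ℕ => (-1:ℝ)^(q.2+1) * b3 q) :=
    summable_sign _ summable_b3 b3_nonneg
  have s3 : Summable (fun q : ℕ × ℕ => (-1:ℝ)^(q.1+1) * b3 q) :=
    summable_sign _ summable_b3 b3_nonneg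
  set Ψ : ℕ × ℕ → ℝ := fun q => b3 q + (-1:ℝ)^(q.2+1) * b3 q + (-1:ℝ)^(q.1+1) * b3 q
      - 3 * ((-1:ℝ)^(q.1+q.2) * b3 q) with hΨ
  have hΨsum : Summable Ψ := ((summable_b3.add s2).add s3).sub (s1.mul_left 3)
  have hlin : ∑' q, Ψ q = (∑' q : ℕ × ℕ, b3 q) + (∑' q : ℕ × ℕ, (-1:ℝ)^(q.2+1) * b3 q)
      + (∑' q : ℕ × ℕ, (-1:ℝ)^(q.1+1) * b3 q)
      - 3 * (∑' q : ℕ × ℕ, (-1:ℝ)^(q.1+q.2) * b3 q) := by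
    rw [hΨ, Summable.tsum_sub ((summable_b3.add s2).add s3) (s1.mul_left 3),
      Summable.tsum_add (summable_b3.add s2) s3, Summable.tsum_add summable_b3 s2, tsum_mul_left]
  have p00 : ∑' q : ℕ × ℕ, Ψ (2*q.1, 2*q.2) = -4 * ∑' q : ℕ × ℕ, b3 (2*q.1, 2*q.2) := by
    have hpt : ∀ q : ℕ × ℕ, Ψ (2*q.1, 2*q.2) = -4 * b3 (2*q.1, 2*q.2) := by
      intro q
      rw [hΨ]
      simp only
      rw [neg_one_pow_odd q.2, neg_one_pow_odd q.1,
        show 2*q.1+2*q.2 = 2*(q.1+q.2) by ring, neg_one_pow_even]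
      ring
    rw [tsum_congr hpt, tsum_mul_left]
  have p10 : ∑' q : ℕ × ℕ, Ψ (2*q.1+1, 2*q.2) = 4 * ∑' q : ℕ × ℕ, b3 (2*q.1+1, 2*q.2) := by
    have hpt : ∀ q : ℕ × ℕ, Ψ (2*q.1+1, 2*q.2) = 4 * b3 (2*q.1+1, 2*q.2) := by
      intro q
      rw [hΨ]
      simp only
      rw [neg_one_pow_odd q.2,
        show 2*q.1+1+1 = 2*(q.1+1) by ring, neg_one_pow_even,
        show 2*q.1+1+2*q.2 = 2*(q.1+q.2)+1 by ring, neg_one_pow_odd]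
      ring
    rw [tsum_congr hpt, tsum_mul_left]
  have p01 : ∑' q : ℕ × ℕ, Ψ (2*q.1, 2*q.2+1) = 4 * ∑' q : ℕ × ℕ, b3 (2*q.1, 2*q.2+1) := by
    have hpt : ∀ q : ℕ × ℕ, Ψ (2*q.1, 2*q.2+1) = 4 * b3 (2*q.1, 2*q.2+1) := by
      intro q
      rw [hΨ]
      simp only
      rw [neg_one_pow_odd q.1,
        show 2*q.2+1+1 = 2*(q.2+1) by ring, neg_one_pow_even,
        show 2*q.1+(2*q.2+1) = 2*(q.1+q.2)+1 by ring, neg_one_pow_odd]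
      ring
    rw [tsum_congr hpt, tsum_mul_left]
  have p11 : ∑' q : ℕ × ℕ, Ψ (2*q.1+1, 2*q.2+1) = 0 := by
    have hpt : ∀ q : ℕ × ℕ, Ψ (2*q.1+1, 2*q.2+1) = 0 := by
      intro q
      rw [hΨ]
      simp only
      rw [show 2*q.2+1+1 = 2*(q.2+1) by ring, neg_one_pow_even,
        show 2*q.1+1+1 = 2*(q.1+1) by ring, neg_one_pow_even,
        show 2*q.1+1+(2*q.2+1) = 2*(q.1+q.2+1) by ring, neg_one_pow_even]
      ring
    rw [tsum_congr hpt, tsum_zero]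
  have h0 : ∑' q, Ψ q = -4 * (∑' q : ℕ × ℕ, b3 (2*q.1, 2*q.2))
      + 4 * (∑' q : ℕ × ℕ, b3 (2*q.1+1, 2*q.2)) + 4 * (∑' q : ℕ × ℕ, b3 (2*q.1, 2*q.2+1))
      + 0 := by
    rw [parity_split Ψ hΨsum, p00, p10, p01, p11]
  have hk := keyI
  linarith

lemma comboII : 2 * (∑' q : ℕ × ℕ, c4 q)
    - 2 * (∑' q : ℕ × ℕ, (-1:ℝ)^(q.1+q.2) * c4 q)
    - (∑' q : ℕ × ℕ, (-1:ℝ)^(q.1+q.2) * e4 q)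
    + (∑' q : ℕ × ℕ, (-1:ℝ)^(q.1+1) * e4 q) = 0 := by
  have s1 : Summable (fun q : ℕ × ℕ => (-1:ℝ)^(q.1+q.2) * c4 q) :=
    summable_sign _ summable_c4 c4_nonneg
  have s2 : Summable (fun q : ℕ × ℕ => (-1:ℝ)^(q.1+q.2) * e4 q) :=
    summable_sign _ summable_e4 e4_nonneg
  have s3 : Summable (fun q : ℕ × ℕ => (-1:ℝ)^(q.1+1) * e4 q) :=
    summable_sign _ summable_e4 e4_nonneg
  set Φ : ℕ × ℕ → ℝ := fun q => 2 * c4 q - 2 * ((-1:ℝ)^(q.1+q.2) * c4 q)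
      - (-1:ℝ)^(q.1+q.2) * e4 q + (-1:ℝ)^(q.1+1) * e4 q with hΦ
  have hΦsum : Summable Φ :=
    (((summable_c4.mul_left 2).sub (s1.mul_left 2)).sub s2).add s3
  have hlin : ∑' q, Φ q = 2 * (∑' q : ℕ × ℕ, c4 q)
      - 2 * (∑' q : ℕ × ℕ, (-1:ℝ)^(q.1+q.2) * c4 q)
      - (∑' q : ℕ × ℕ, (-1:ℝ)^(q.1+q.2) * e4 q)
      + (∑' q : ℕ × ℕ, (-1:ℝ)^(q.1+1) * e4 q) := by
    rw [hΦ, Summable.tsum_add (((summable_c4.mul_left 2).sub (s1.mul_left 2)).sub s2) s3,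
      Summable.tsum_sub ((summable_c4.mul_left 2).sub (s1.mul_left 2)) s2,
      Summable.tsum_sub (summable_c4.mul_left 2) (s1.mul_left 2), tsum_mul_left, tsum_mul_left]
  have p00 : ∑' q : ℕ × ℕ, Φ (2*q.1, 2*q.2) = -2 * ∑' q : ℕ × ℕ, e4 (2*q.1, 2*q.2) := by
    have hpt : ∀ q : ℕ × ℕ, Φ (2*q.1, 2*q.2) = -2 * e4 (2*q.1, 2*q.2) := by
      intro q
      rw [hΦ]
      simp only
      rw [neg_one_pow_odd q.1, show 2*q.1+2*q.2 = 2*(q.1+q.2) by ring, neg_one_pow_even]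
      ring
    rw [tsum_congr hpt, tsum_mul_left]
  have p10 : ∑' q : ℕ × ℕ, Φ (2*q.1+1, 2*q.2)
      = 4 * (∑' q : ℕ × ℕ, c4 (2*q.1+1, 2*q.2)) + 2 * ∑' q : ℕ × ℕ, e4 (2*q.1+1, 2*q.2) := by
    have hpt : ∀ q : ℕ × ℕ, Φ (2*q.1+1, 2*q.2)
        = 4 * c4 (2*q.1+1, 2*q.2) + 2 * e4 (2*q.1+1, 2*q.2) := by
      intro q
      rw [hΦ]
      simp only
      rw [show 2*q.1+1+1 = 2*(q.1+1) by ring, neg_one_pow_even,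
        show 2*q.1+1+2*q.2 = 2*(q.1+q.2)+1 by ring, neg_one_pow_odd]
      ring
    rw [tsum_congr hpt,
      Summable.tsum_add ((summable_c4_10).mul_left 4) ((summable_e4_10).mul_left 2),
      tsum_mul_left, tsum_mul_left]
  have p01 : ∑' q : ℕ × ℕ, Φ (2*q.1, 2*q.2+1) = 4 * ∑' q : ℕ × ℕ, c4 (2*q.1, 2*q.2+1) := by
    have hpt : ∀ q : ℕ × ℕ, Φ (2*q.1, 2*q.2+1) = 4 * c4 (2*q.1, 2*q.2+1) := by
      intro q
      rw [hΦ]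
      simp only
      rw [neg_one_pow_odd q.1,
        show 2*q.1+(2*q.2+1) = 2*(q.1+q.2)+1 by ring, neg_one_pow_odd]
      ring
    rw [tsum_congr hpt, tsum_mul_left]
  have p11 : ∑' q : ℕ × ℕ, Φ (2*q.1+1, 2*q.2+1) = 0 := by
    have hpt : ∀ q : ℕ × ℕ, Φ (2*q.1+1, 2*q.2+1) = 0 := by
      intro q
      rw [hΦ]
      simp only
      rw [show 2*q.1+1+1 = 2*(q.1+1) by ring, neg_one_pow_even,
        show 2*q.1+1+(2*q.2+1) = 2*(q.1+q.2+1) by ring, neg_one_pow_even]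
      ring
    rw [tsum_congr hpt, tsum_zero]
  have h0 : ∑' q, Φ q = -2 * (∑' q : ℕ × ℕ, e4 (2*q.1, 2*q.2))
      + (4 * (∑' q : ℕ × ℕ, c4 (2*q.1+1, 2*q.2)) + 2 * ∑' q : ℕ × ℕ, e4 (2*q.1+1, 2*q.2))
      + 4 * (∑' q : ℕ × ℕ, c4 (2*q.1, 2*q.2+1)) + 0 := by
    rw [parity_split Φ hΦsum, p00, p10, p01, p11]
  have hk := keyII
  linarith

end Euler19

theorem stmt_19 :
    (3 * dsum (fun m n => (-1 : ℝ) ^ m / ((m : ℝ) ^ 2 * n))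
      = dsum (fun m n => 1 / ((m : ℝ) ^ 2 * n))
        + dsum (fun m n => (-1 : ℝ) ^ n / ((m : ℝ) ^ 2 * n))
        + dsum (fun m n => (-1 : ℝ) ^ (m + n) / ((m : ℝ) ^ 2 * n))) ∧
    (2 * dsum (fun m n => 1 / ((m : ℝ) ^ 3 * n))
      = 2 * dsum (fun m n => (-1 : ℝ) ^ m / ((m : ℝ) ^ 3 * n))
        + dsum (fun m n => (-1 : ℝ) ^ m / ((m : ℝ) ^ 2 * (n : ℝ) ^ 2))
        - dsum (fun m n => (-1 : ℝ) ^ (m + n) / ((m : ℝ) ^ 2 * (n : ℝ) ^ 2))) := by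
  constructor
  · rw [Euler19.D0_eq, Euler19.D1_eq, Euler19.D2_eq, Euler19.D3_eq]
    have h := Euler19.comboI
    linarith
  · rw [Euler19.C0_eq, Euler19.C1_eq, Euler19.E2_eq, Euler19.E3_eq]
    have h := Euler19.comboII
    linarith

end
end
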